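/- arXiv:1812.07186 — 3 statements merged into one kernel-verified Lean document; each statement's English description precedes it below -/
import Mathlib

section
/- Let z ∈ W^{2,2}([a,b];ℝ^{n_p}) satisfy the boundary condition B_c z_b = 0, where B_c ∈ ℝ^{2n_p×4n_p} and B_c B_d is invertible, and let C₁ ∈ ℝ^{p×4n_p} be any matrix. Define C₃(s) = −C₁ B_d B_f(s) + C₁ col(0, (b−s)I, 0, I) for s ∈ [a,b]. Then C₁ z_b = ∫ₐᵇ C₃(s) z_ss(s) ds. -/
open MeasureTheory Matrix Set

noncomputable section

/-- The block matrix `B_d ∈ ℝ^{4n_p × 2n_p}` with block rows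
`[I, 0]`, `[I, (b−a)I]`, `[0, I]`, `[0, I]`. -/
def Bdm (a b : ℝ) (np : ℕ) : Matrix (Fin 4 × Fin np) (Fin 2 × Fin np) ℝ :=
  Matrix.of fun p q =>
    (![![(1 : Matrix (Fin np) (Fin np) ℝ), 0],
       ![1, (b - a) • 1],
       ![0, 1],
       ![0, 1]] p.1 q.1) p.2 q.2

/-- The block column `col(0, (b−η)I, 0, I) ∈ ℝ^{4n_p × n_p}`. -/
def colE (b : ℝ) (np : ℕ) (η : ℝ) : Matrix (Fin 4 × Fin np) (Fin np) ℝ :=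
  Matrix.of fun p j =>
    (![(0 : Matrix (Fin np) (Fin np) ℝ), (b - η) • 1, 0, 1] p.1) p.2 j

/-- `B_f(η) = (B_c B_d)⁻¹ B_c col(0,(b−η)I,0,I)`. -/
def Bfm (a b : ℝ) {np : ℕ}
    (Bc : Matrix (Fin 2 × Fin np) (Fin 4 × Fin np) ℝ) (η : ℝ) :
    Matrix (Fin 2 × Fin np) (Fin np) ℝ :=
  (Bc * Bdm a b np)⁻¹ * Bc * colE b np η

/-- The block row `[I, (s−a)I] ∈ ℝ^{n_p × 2n_p}`. -/
def rowIA (a : ℝ) (np : ℕ) (s : ℝ) : Matrix (Fin np) (Fin 2 × Fin np) ℝ :=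
  Matrix.of fun i q => (![(1 : Matrix (Fin np) (Fin np) ℝ), (s - a) • 1] q.1) i q.2

/-- The block row `[0, I] ∈ ℝ^{n_p × 2n_p}`. -/
def rowZI (np : ℕ) : Matrix (Fin np) (Fin 2 × Fin np) ℝ :=
  Matrix.of fun i q => (![(0 : Matrix (Fin np) (Fin np) ℝ), 1] q.1) i q.2

/-- `B_a(s,η) = −[I,(s−a)I] B_f(η)`. -/
def Bam (a b : ℝ) {np : ℕ}
    (Bc : Matrix (Fin 2 × Fin np) (Fin 4 × Fin np) ℝ) (s η : ℝ) :
    Matrix (Fin np) (Fin np) ℝ :=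
  -(rowIA a np s * Bfm a b Bc η)

/-- `B_b(η) = −[0,I] B_f(η)`. -/
def Bbm (a b : ℝ) {np : ℕ}
    (Bc : Matrix (Fin 2 × Fin np) (Fin 4 × Fin np) ℝ) (η : ℝ) :
    Matrix (Fin np) (Fin np) ℝ :=
  -(rowZI np * Bfm a b Bc η)

/-- `G₁(s,η) = B_a(s,η) + (s−η)I`. -/
def G1m (a b : ℝ) {np : ℕ}
    (Bc : Matrix (Fin 2 × Fin np) (Fin 4 × Fin np) ℝ) (s η : ℝ) :
    Matrix (Fin np) (Fin np) ℝ :=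
  Bam a b Bc s η + (s - η) • 1

/-- `G₂(s,η) = B_a(s,η)`. -/
def G2m (a b : ℝ) {np : ℕ}
    (Bc : Matrix (Fin 2 × Fin np) (Fin 4 × Fin np) ℝ) (s η : ℝ) :
    Matrix (Fin np) (Fin np) ℝ :=
  Bam a b Bc s η

/-- `G₃(s,η) = B_b(η) + I`. -/
def G3m (a b : ℝ) {np : ℕ}
    (Bc : Matrix (Fin 2 × Fin np) (Fin 4 × Fin np) ℝ) (_s η : ℝ) :
    Matrix (Fin np) (Fin np) ℝ :=
  Bbm a b Bc η + 1

/-- `G₄(s,η) = B_b(η)`. -/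
def G4m (a b : ℝ) {np : ℕ}
    (Bc : Matrix (Fin 2 × Fin np) (Fin 4 × Fin np) ℝ) (_s η : ℝ) :
    Matrix (Fin np) (Fin np) ℝ :=
  Bbm a b Bc η

/-- The boundary vector `z_b = col(z(a), z(b), z_s(a), z_s(b)) ∈ ℝ^{4n_p}`. -/
def zbv (a b : ℝ) {np : ℕ} (z zs : ℝ → Fin np → ℝ) : Fin 4 × Fin np → ℝ :=
  fun p => ![z a, z b, zs a, zs b] p.1 p.2

private theorem myftc_aux {a b : ℝ} (hab : a ≤ b) {f f' : ℝ → ℝ}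
    (hd : ∀ s ∈ Icc a b, HasDerivWithinAt f (f' s) (Icc a b) s)
    (hi : IntervalIntegrable f' volume a b) :
    ∫ s in a..b, f' s = f b - f a := by
  apply intervalIntegral.integral_eq_sub_of_hasDeriv_right_of_le hab
  · exact fun s hs => (hd s hs).continuousWithinAt
  · intro s hs
    exact (hd s (Ioo_subset_Icc_self hs)).mono_of_mem_nhdsWithin
      (Icc_mem_nhdsGT_of_mem ⟨hs.1.le, hs.2⟩)
  · exact hi

/-- If `z ∈ W^{2,2}([a,b];ℝ^{n_p})` satisfies `B_c z_b = 0` with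
`B_c B_d` invertible, and `C₃(s) = −C₁ B_d B_f(s) + C₁ col(0,(b−s)I,0,I)`, then
`C₁ z_b = ∫ₐᵇ C₃(s) z_ss(s) ds` for any matrix `C₁ ∈ ℝ^{p × 4n_p}`. -/
theorem C1zb_from_zss {np p : ℕ} (a b : ℝ) (hab : a < b)
    (z zs zss : ℝ → Fin np → ℝ)
    (hz : ∀ s ∈ Icc a b, HasDerivWithinAt z (zs s) (Icc a b) s)
    (hzs : ∀ s ∈ Icc a b, HasDerivWithinAt zs (zss s) (Icc a b) s)
    (hzss : MemLp zss 2 (volume.restrict (Icc a b)))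
    (Bc : Matrix (Fin 2 × Fin np) (Fin 4 × Fin np) ℝ)
    (hdet : IsUnit (Bc * Bdm a b np).det)
    (hbc : Bc.mulVec (zbv a b z zs) = 0)
    (C1 : Matrix (Fin p) (Fin 4 × Fin np) ℝ) :
    C1.mulVec (zbv a b z zs)
      = fun i => ∫ s in a..b,
          ((-(C1 * Bdm a b np * Bfm a b Bc s) + C1 * colE b np s)).mulVec (zss s) i := by
  have hab' : a ≤ b := hab.le
  haveI hfin : IsFiniteMeasure (volume.restrict (Icc a b)) :=
    ⟨by rw [Measure.restrict_apply_univ]; exact measure_Icc_lt_top⟩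
  have hIntV : Integrable zss (volume.restrict (Icc a b)) := hzss.integrable (by norm_num)
  have hIntj : ∀ j : Fin np, IntervalIntegrable (fun s => zss s j) volume a b := by
    intro j
    have h1 : Integrable (fun s => zss s j) (volume.restrict (Icc a b)) :=
      (ContinuousLinearMap.proj (R := ℝ) (φ := fun _ : Fin np => ℝ) j).integrable_comp hIntV
    exact (by rwa [uIcc_of_le hab'] :
      IntegrableOn (fun s => zss s j) (uIcc a b) volume).intervalIntegrable
  have hIntj2 : ∀ j : Fin np, IntervalIntegrable (fun s => (b - s) * zss s j) volume a b :=
    fun j => (hIntj j).continuousOn_mul (by fun_prop)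
  have hzj : ∀ (j : Fin np) (s : ℝ), s ∈ Icc a b →
      HasDerivWithinAt (fun t => z t j) (zs s j) (Icc a b) s :=
    fun j s hs => hasDerivWithinAt_pi.mp (hz s hs) j
  have hzsj : ∀ (j : Fin np) (s : ℝ), s ∈ Icc a b →
      HasDerivWithinAt (fun t => zs t j) (zss s j) (Icc a b) s :=
    fun j s hs => hasDerivWithinAt_pi.mp (hzs s hs) j
  have fact1 : ∀ j, ∫ s in a..b, zss s j = zs b j - zs a j :=
    fun j => myftc_aux hab' (hzsj j) (hIntj j)
  have fact2 : ∀ j, ∫ s in a..b, (b - s) * zss s j = z b j - (z a j + (b - a) * zs a j) := by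
    intro j
    have hd : ∀ s ∈ Icc a b, HasDerivWithinAt (fun t => z t j + (b - t) * zs t j)
        ((b - s) * zss s j) (Icc a b) s := by
      intro s hs
      have h1 : HasDerivWithinAt (fun t : ℝ => b - t) (-1) (Icc a b) s := by
        simpa using (hasDerivWithinAt_id s (Icc a b)).const_sub b
      have h3 := (hzj j s hs).add (h1.mul (hzsj j s hs))
      exact h3.congr_deriv (by ring)
    have := myftc_aux hab' hd (hIntj2 j)
    rw [this]; ring
  set v : Fin 2 × Fin np → ℝ := fun q => ![z a, zs a] q.1 q.2 with hvdef
  set w : Fin 4 × Fin np → ℝ := fun p =>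
    ![fun _ => (0 : ℝ), fun j => ∫ s in a..b, (b - s) * zss s j, fun _ => 0,
      fun j => ∫ s in a..b, zss s j] p.1 p.2 with hwdef
  have hdecomp : zbv a b z zs = (Bdm a b np).mulVec v + w := by
    funext q
    obtain ⟨k, i⟩ := q
    fin_cases k <;>
      simp [zbv, Bdm, hwdef, hvdef, Matrix.mulVec, dotProduct, Fintype.sum_prod_type,
        Matrix.one_apply, Matrix.smul_apply, Matrix.vecHead, Matrix.vecTail,
        fact1, fact2] <;> ring
  have hBc0 : (Bc * Bdm a b np).mulVec v + Bc.mulVec w = 0 := by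
    rw [← Matrix.mulVec_mulVec, ← Matrix.mulVec_add, ← hdecomp, hbc]
  have hv' : v = -(((Bc * Bdm a b np)⁻¹ * Bc).mulVec w) := by
    have h1 : (Bc * Bdm a b np).mulVec v = -(Bc.mulVec w) := by
      rw [eq_neg_iff_add_eq_zero]; exact hBc0
    calc v = ((Bc * Bdm a b np)⁻¹ * (Bc * Bdm a b np)).mulVec v := by
          rw [Matrix.nonsing_inv_mul _ hdet, Matrix.one_mulVec]
      _ = (Bc * Bdm a b np)⁻¹.mulVec ((Bc * Bdm a b np).mulVec v) := by
          rw [Matrix.mulVec_mulVec]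
      _ = -(((Bc * Bdm a b np)⁻¹ * Bc).mulVec w) := by
          rw [h1, Matrix.mulVec_neg, Matrix.mulVec_mulVec]
  have hcol : ∀ (s : ℝ) (k : Fin 4) (i : Fin np),
      (colE b np s).mulVec (zss s) (k, i)
        = ![fun _ => (0 : ℝ), fun i => (b - s) * zss s i, fun _ => 0,
            fun i => zss s i] k i := by
    intro s k i
    fin_cases k <;>
      simp [colE, Matrix.mulVec, dotProduct, Matrix.one_apply, Matrix.smul_apply]
  have hw : ∀ q, ∫ s in a..b, (colE b np s).mulVec (zss s) q = w q := by
    rintro ⟨k, i⟩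
    simp only [hcol]
    fin_cases k <;> simp [hwdef]
  have hIntq : ∀ q : Fin 4 × Fin np,
      IntervalIntegrable (fun s => (colE b np s).mulVec (zss s) q) volume a b := by
    rintro ⟨k, i⟩
    simp only [hcol]
    fin_cases k
    · simpa using intervalIntegrable_const (c := (0 : ℝ)) (μ := volume) (a := a) (b := b)
    · simpa using hIntj2 i
    · simpa using intervalIntegrable_const (c := (0 : ℝ)) (μ := volume) (a := a) (b := b)
    · simpa using hIntj i
  set M : Matrix (Fin p) (Fin 4 × Fin np) ℝ :=
    C1 * Bdm a b np * ((Bc * Bdm a b np)⁻¹ * Bc) with hM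
  have hre : ∀ s : ℝ,
      (-(C1 * Bdm a b np * Bfm a b Bc s) + C1 * colE b np s).mulVec (zss s)
        = (-M + C1).mulVec ((colE b np s).mulVec (zss s)) := by
    intro s
    rw [Matrix.mulVec_mulVec]
    congr 1
    simp only [Bfm, hM, Matrix.add_mul, Matrix.neg_mul, Matrix.mul_assoc]
  have hLHS : C1.mulVec (zbv a b z zs) = (-M + C1).mulVec w := by
    rw [hdecomp, Matrix.mulVec_add, Matrix.mulVec_mulVec, hv', Matrix.mulVec_neg,
      Matrix.mulVec_mulVec, Matrix.add_mulVec, Matrix.neg_mulVec, ← hM]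
  funext i
  rw [hLHS]
  have hrw : ∀ s : ℝ, (-M + C1).mulVec ((colE b np s).mulVec (zss s)) i
      = ∑ q : Fin 4 × Fin np, (-M + C1) i q * (colE b np s).mulVec (zss s) q := by
    intro s; rfl
  calc (-M + C1).mulVec w i
      = ∑ q : Fin 4 × Fin np, (-M + C1) i q * w q := rfl
    _ = ∑ q : Fin 4 × Fin np, (-M + C1) i q
          * ∫ s in a..b, (colE b np s).mulVec (zss s) q := by
        simp only [hw]
    _ = ∑ q : Fin 4 × Fin np,
          ∫ s in a..b, (-M + C1) i q * (colE b np s).mulVec (zss s) q := by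
        refine Finset.sum_congr rfl fun q _ => ?_
        rw [intervalIntegral.integral_const_mul]
    _ = ∫ s in a..b,
          ∑ q : Fin 4 × Fin np, (-M + C1) i q * (colE b np s).mulVec (zss s) q := by
        rw [intervalIntegral.integral_finset_sum
          (fun q _ => (hIntq q).const_mul _)]
    _ = ∫ s in a..b,
          (-(C1 * Bdm a b np * Bfm a b Bc s) + C1 * colE b np s).mulVec (zss s) i := by
        refine intervalIntegral.integral_congr fun s _ => ?_
        rw [hre s, hrw s]

end
end

section
/- Let P ∈ ℝ^{n₀×n₀} be symmetric, Q : [a,b] → ℝ^{n₀×n_p}, S : [a,b] → ℝ^{n_p×n_p} with S(s) symmetric, and R₁, R₂ : [a,b]×[a,b] → ℝ^{n_p×n_p} with R₂(s,η) = R₁(η,s)ᵀ, all bounded measurable, and set 𝒫 = 𝒫_{P,Q,Qᵀ,S,R₁,R₂}. Let 𝒫_dyn be as in the total fundamental representation of the coupled PDE-ODE system, and let 𝒦 = 𝒫_{I,0,0,0,G₁,G₂}* ∘ 𝒫 ∘ 𝒫_dyn, where * denotes the adjoint with respect to ⟨·,·⟩_X. Then for every x ∈ ℝ^{n₀} and every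 z ∈ W^{2,2}([a,b];ℝ^{n_p}) with B_c z_b = 0, ⟨(x,z), 𝒫·𝒫_dyn(x,z_ss)⟩_X + ⟨𝒫_dyn(x,z_ss), 𝒫(x,z)⟩_X = 2⟨(x,z_ss), 𝒦(x,z_ss)⟩_X. -/
open MeasureTheory Matrix Set

noncomputable section

/-- The operator `𝒫_{P,Q₁,Q₂,S,R₁,R₂}` on `ℝ^m × L²([a,b];ℝⁿ)`, applied to a pair
`u = (x, z)`.  All integrals are taken entrywise. -/
def Pop (a b : ℝ) {m n : ℕ}
    (P : Matrix (Fin m) (Fin m) ℝ)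
    (Q1 : ℝ → Matrix (Fin m) (Fin n) ℝ)
    (Q2 : ℝ → Matrix (Fin n) (Fin m) ℝ)
    (S : ℝ → Matrix (Fin n) (Fin n) ℝ)
    (R1 R2 : ℝ → ℝ → Matrix (Fin n) (Fin n) ℝ)
    (u : (Fin m → ℝ) × (ℝ → Fin n → ℝ)) :
    (Fin m → ℝ) × (ℝ → Fin n → ℝ) :=
  (P.mulVec u.1 + (fun i => ∫ s in a..b, (Q1 s).mulVec (u.2 s) i),
   fun s => (Q2 s).mulVec u.1 + (S s).mulVec (u.2 s)
     + (fun i => ∫ η in a..s, (R1 s η).mulVec (u.2 η) i)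
     + (fun i => ∫ η in s..b, (R2 s η).mulVec (u.2 η) i))

/-- The inner product on `X = ℝ^m × L²([a,b];ℝⁿ)`:
`⟨(x₁,x₂),(z₁,z₂)⟩_X = x₁ᵀz₁ + ∫ₐᵇ x₂(s)ᵀ z₂(s) ds`. -/
def innerX (a b : ℝ) {m n : ℕ}
    (u v : (Fin m → ℝ) × (ℝ → Fin n → ℝ)) : ℝ :=
  u.1 ⬝ᵥ v.1 + ∫ s in a..b, u.2 s ⬝ᵥ v.2 s

/-- `z ∈ L²([a,b];ℝⁿ)`. -/
def MemL2 (a b : ℝ) {n : ℕ} (z : ℝ → Fin n → ℝ) : Prop :=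
  MemLp z 2 (volume.restrict (Icc a b))

/-- A bounded measurable matrix-valued function on `[a,b]`. -/
def BddMeas (a b : ℝ) {k l : ℕ} (F : ℝ → Matrix (Fin k) (Fin l) ℝ) : Prop :=
  (∀ i j, Measurable fun s => F s i j) ∧
    ∃ C, ∀ s ∈ Icc a b, ∀ i j, |F s i j| ≤ C

/-- A bounded measurable matrix-valued kernel on `[a,b] × [a,b]`. -/
def BddMeas2 (a b : ℝ) {k l : ℕ} (F : ℝ → ℝ → Matrix (Fin k) (Fin l) ℝ) : Prop :=
  (∀ i j, Measurable fun p : ℝ × ℝ => F p.1 p.2 i j) ∧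
    ∃ C, ∀ s ∈ Icc a b, ∀ η ∈ Icc a b, ∀ i j, |F s η i j| ≤ C

/-- Entrywise integral of a matrix-valued function. -/
def mInt {k l : ℕ} (c d : ℝ) (F : ℝ → Matrix (Fin k) (Fin l) ℝ) :
    Matrix (Fin k) (Fin l) ℝ :=
  Matrix.of fun i j => ∫ t in c..d, F t i j

/-- The PDE output map `𝒞z = C₁z_b + ∫ₐᵇ (C_a(s)z(s) + C_b(s)z_s(s)) ds`. -/
def Cop (a b : ℝ) {np pp : ℕ} (C1 : Matrix (Fin pp) (Fin 4 × Fin np) ℝ)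
    (Ca Cb : ℝ → Matrix (Fin pp) (Fin np) ℝ) (z zs : ℝ → Fin np → ℝ) : Fin pp → ℝ :=
  fun i => C1.mulVec (zbv a b z zs) i
    + ∫ s in a..b, ((Ca s).mulVec (z s) i + (Cb s).mulVec (zs s) i)

/-- `C₃(s) = −C₁ B_d B_f(s) + C₁ col(0,(b−s)I,0,I)`. -/
def C3m (a b : ℝ) {np pp : ℕ}
    (Bc : Matrix (Fin 2 × Fin np) (Fin 4 × Fin np) ℝ)
    (C1 : Matrix (Fin pp) (Fin 4 × Fin np) ℝ) (s : ℝ) :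
    Matrix (Fin pp) (Fin np) ℝ :=
  -(C1 * Bdm a b np * Bfm a b Bc s) + C1 * colE b np s

/-- The closed-loop generator `Ā` of the coupled PDE-ODE system, applied to `(x,z)`. -/
def Abar (a b : ℝ) {n0 np m0 p0 mp pp : ℕ}
    (A : Matrix (Fin n0) (Fin n0) ℝ) (B : Matrix (Fin n0) (Fin m0) ℝ)
    (C : Matrix (Fin p0) (Fin n0) ℝ)
    (L1 : Matrix (Fin m0) (Fin p0) ℝ) (L2 : Matrix (Fin m0) (Fin pp) ℝ)
    (L3 : Matrix (Fin mp) (Fin p0) ℝ) (L4 : Matrix (Fin mp) (Fin pp) ℝ)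
    (A0 A1 A2 : ℝ → Matrix (Fin np) (Fin np) ℝ)
    (B1 : ℝ → Matrix (Fin np) (Fin mp) ℝ)
    (Ca Cb : ℝ → Matrix (Fin pp) (Fin np) ℝ)
    (C1 : Matrix (Fin pp) (Fin 4 × Fin np) ℝ)
    (x : Fin n0 → ℝ) (z zs zss : ℝ → Fin np → ℝ) :
    (Fin n0 → ℝ) × (ℝ → Fin np → ℝ) :=
  ((A + B * L1 * C).mulVec x + (B * L2).mulVec (Cop a b C1 Ca Cb z zs),
   fun s => (B1 s * L3 * C).mulVec x + (A0 s).mulVec (z s) + (A1 s).mulVec (zs s)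
     + (A2 s).mulVec (zss s) + (B1 s * L4).mulVec (Cop a b C1 Ca Cb z zs))

/-- The total fundamental representation operator
`𝒫_dyn = 𝒫_{A+BL₁C, BL₂C_a, B₁L₃C, A₀+B₁L₄C_a, 0, 0} ∘ 𝒫_{I,0,0,0,G₁,G₂}`
`+ 𝒫_{0, BL₂C_b, 0, A₁+B₁L₄C_b, 0, 0} ∘ 𝒫_{I,0,0,0,G₃,G₄}`
`+ 𝒫_{0, BL₂C₃, 0, A₂+B₁L₄C₃, 0, 0}`, applied to `u`. -/
def PdynApply (a b : ℝ) {n0 np m0 p0 mp pp : ℕ}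
    (A : Matrix (Fin n0) (Fin n0) ℝ) (B : Matrix (Fin n0) (Fin m0) ℝ)
    (C : Matrix (Fin p0) (Fin n0) ℝ)
    (L1 : Matrix (Fin m0) (Fin p0) ℝ) (L2 : Matrix (Fin m0) (Fin pp) ℝ)
    (L3 : Matrix (Fin mp) (Fin p0) ℝ) (L4 : Matrix (Fin mp) (Fin pp) ℝ)
    (A0 A1 A2 : ℝ → Matrix (Fin np) (Fin np) ℝ)
    (B1 : ℝ → Matrix (Fin np) (Fin mp) ℝ)
    (Ca Cb : ℝ → Matrix (Fin pp) (Fin np) ℝ)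
    (C1 : Matrix (Fin pp) (Fin 4 × Fin np) ℝ)
    (Bc : Matrix (Fin 2 × Fin np) (Fin 4 × Fin np) ℝ)
    (u : (Fin n0 → ℝ) × (ℝ → Fin np → ℝ)) :
    (Fin n0 → ℝ) × (ℝ → Fin np → ℝ) :=
  Pop a b (A + B * L1 * C) (fun s => B * L2 * Ca s) (fun s => B1 s * L3 * C)
      (fun s => A0 s + B1 s * L4 * Ca s) (fun _ _ => 0) (fun _ _ => 0)
      (Pop a b 1 (fun _ => 0) (fun _ => 0) (fun _ => 0) (G1m a b Bc) (G2m a b Bc) u)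
  + Pop a b 0 (fun s => B * L2 * Cb s) (fun _ => 0)
      (fun s => A1 s + B1 s * L4 * Cb s) (fun _ _ => 0) (fun _ _ => 0)
      (Pop a b 1 (fun _ => 0) (fun _ => 0) (fun _ => 0) (G3m a b Bc) (G4m a b Bc) u)
  + Pop a b 0 (fun s => B * L2 * C3m a b Bc C1 s) (fun _ => 0)
      (fun s => A2 s + B1 s * L4 * C3m a b Bc C1 s) (fun _ _ => 0) (fun _ _ => 0) u

/-- The adjoint `𝒫_{I,0,0,0,G₁,G₂}*`, i.e. `𝒫_{I,0,0,0,G₂(η,s)ᵀ,G₁(η,s)ᵀ}`, applied to `u`. -/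
def PGadjApply (a b : ℝ) {n0 np : ℕ}
    (Bc : Matrix (Fin 2 × Fin np) (Fin 4 × Fin np) ℝ)
    (u : (Fin n0 → ℝ) × (ℝ → Fin np → ℝ)) :
    (Fin n0 → ℝ) × (ℝ → Fin np → ℝ) :=
  Pop a b 1 (fun _ => 0) (fun _ => 0) (fun _ => 0)
    (fun s η => (G2m a b Bc η s)ᵀ) (fun s η => (G1m a b Bc η s)ᵀ) u

/-- The operator `𝒦 = 𝒫_{I,0,0,0,G₁,G₂}* ∘ 𝒫 ∘ 𝒫_dyn`, applied to `u`. -/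
def Kapply (a b : ℝ) {n0 np m0 p0 mp pp : ℕ}
    (A : Matrix (Fin n0) (Fin n0) ℝ) (B : Matrix (Fin n0) (Fin m0) ℝ)
    (C : Matrix (Fin p0) (Fin n0) ℝ)
    (L1 : Matrix (Fin m0) (Fin p0) ℝ) (L2 : Matrix (Fin m0) (Fin pp) ℝ)
    (L3 : Matrix (Fin mp) (Fin p0) ℝ) (L4 : Matrix (Fin mp) (Fin pp) ℝ)
    (A0 A1 A2 : ℝ → Matrix (Fin np) (Fin np) ℝ)
    (B1 : ℝ → Matrix (Fin np) (Fin mp) ℝ)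
    (Ca Cb : ℝ → Matrix (Fin pp) (Fin np) ℝ)
    (C1 : Matrix (Fin pp) (Fin 4 × Fin np) ℝ)
    (Bc : Matrix (Fin 2 × Fin np) (Fin 4 × Fin np) ℝ)
    (P : Matrix (Fin n0) (Fin n0) ℝ) (Q : ℝ → Matrix (Fin n0) (Fin np) ℝ)
    (S : ℝ → Matrix (Fin np) (Fin np) ℝ) (R1 R2 : ℝ → ℝ → Matrix (Fin np) (Fin np) ℝ)
    (u : (Fin n0 → ℝ) × (ℝ → Fin np → ℝ)) :
    (Fin n0 → ℝ) × (ℝ → Fin np → ℝ) :=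
  PGadjApply a b Bc
    (Pop a b P Q (fun s => (Q s)ᵀ) S R1 R2
      (PdynApply a b A B C L1 L2 L3 L4 A0 A1 A2 B1 Ca Cb C1 Bc u))

section LDaux

open intervalIntegral in
/-- The base measure: Lebesgue restricted to `Ioc a b`. -/
noncomputable def LDm (a b : ℝ) : MeasureTheory.Measure ℝ := volume.restrict (Ioc a b)

instance (a b : ℝ) : IsFiniteMeasure (LDm a b) := by
  constructor
  rw [LDm, Measure.restrict_apply_univ]
  exact measure_Ioc_lt_top

variable {a b : ℝ}

/-- Bounded a.e.-measurable scalar function on `[a,b]`. -/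
def LDBM (a b : ℝ) (f : ℝ → ℝ) : Prop :=
  AEStronglyMeasurable f (LDm a b) ∧ ∃ C : ℝ, ∀ᵐ s ∂(LDm a b), |f s| ≤ C

namespace LDBM

lemma const (c : ℝ) : LDBM a b fun _ => c :=
  ⟨aestronglyMeasurable_const, |c|, Filter.Eventually.of_forall fun _ => le_rfl⟩

lemma add {f g : ℝ → ℝ} (hf : LDBM a b f) (hg : LDBM a b g) :
    LDBM a b fun s => f s + g s := by
  obtain ⟨Cf, hCf⟩ := hf.2; obtain ⟨Cg, hCg⟩ := hg.2
  refine ⟨hf.1.add hg.1, Cf + Cg, ?_⟩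
  filter_upwards [hCf, hCg] with s h1 h2
  exact (abs_add_le _ _).trans (add_le_add h1 h2)

lemma neg {f : ℝ → ℝ} (hf : LDBM a b f) : LDBM a b fun s => -f s := by
  obtain ⟨Cf, hCf⟩ := hf.2
  exact ⟨hf.1.neg, Cf, hCf.mono fun s h => by rwa [abs_neg]⟩

lemma mul {f g : ℝ → ℝ} (hf : LDBM a b f) (hg : LDBM a b g) :
    LDBM a b fun s => f s * g s := by
  obtain ⟨Cf, hCf⟩ := hf.2; obtain ⟨Cg, hCg⟩ := hg.2
  refine ⟨hf.1.mul hg.1, (|Cf| + 1) * (|Cg| + 1), ?_⟩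
  filter_upwards [hCf, hCg] with s h1 h2
  rw [abs_mul]
  have h1' : |f s| ≤ |Cf| + 1 := h1.trans ((le_abs_self _).trans (by linarith))
  have h2' : |g s| ≤ |Cg| + 1 := h2.trans ((le_abs_self _).trans (by linarith))
  exact mul_le_mul h1' h2' (abs_nonneg _) (by positivity)

lemma sum {ι : Type*} (t : Finset ι) {f : ι → ℝ → ℝ} (hf : ∀ i ∈ t, LDBM a b (f i)) :
    LDBM a b fun s => ∑ i ∈ t, f i s := by
  classical
  induction t using Finset.induction_on with
  | empty => simpa using const 0
  | insert c t' hx ih =>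
      simp only [Finset.sum_insert hx]
      exact (hf c (Finset.mem_insert_self c t')).add
        (ih fun i hi => hf i (Finset.mem_insert_of_mem hi))

lemma integrable {f : ℝ → ℝ} (hf : LDBM a b f) : Integrable f (LDm a b) := by
  obtain ⟨C, hC⟩ := hf.2
  exact (integrable_const C).mono' hf.1 (hC.mono fun s h => by simpa using h)

lemma mul_integrable {f g : ℝ → ℝ} (hf : LDBM a b f) (hg : Integrable g (LDm a b)) :
    Integrable (fun s => f s * g s) (LDm a b) := by
  obtain ⟨C, hC⟩ := hf.2
  exact hg.bdd_mul hf.1 (hC.mono fun s h => by simpa using h)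

lemma of_continuous {f : ℝ → ℝ} (hf : Continuous f) : LDBM a b f := by
  obtain ⟨C, hC⟩ := isCompact_Icc.exists_bound_of_continuousOn (hf.continuousOn (s := Icc a b))
  refine ⟨hf.aestronglyMeasurable, C, ?_⟩
  filter_upwards [ae_restrict_mem measurableSet_Ioc] with s hs
  simpa using hC s (Ioc_subset_Icc_self hs)

lemma of_bddMeas {k l : ℕ} {F : ℝ → Matrix (Fin k) (Fin l) ℝ} (hF : BddMeas a b F)
    (i : Fin k) (j : Fin l) : LDBM a b fun s => F s i j := by
  obtain ⟨hm, C, hC⟩ := hF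
  refine ⟨((hm i j).aestronglyMeasurable).restrict, C, ?_⟩
  filter_upwards [ae_restrict_mem measurableSet_Ioc] with s hs
  exact hC s (Ioc_subset_Icc_self hs) i j

end LDBM

/-- Bounded a.e.-measurable kernel on `[a,b]²`. -/
def LDBM2 (a b : ℝ) (f : ℝ × ℝ → ℝ) : Prop :=
  AEStronglyMeasurable f ((LDm a b).prod (LDm a b)) ∧
    ∃ C : ℝ, ∀ᵐ p ∂((LDm a b).prod (LDm a b)), |f p| ≤ C

lemma LDm_prod_ae_mem :
    ∀ᵐ p ∂((LDm a b).prod (LDm a b)), p.1 ∈ Ioc a b ∧ p.2 ∈ Ioc a b := by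
  have : (LDm a b).prod (LDm a b) = (volume.prod volume).restrict (Ioc a b ×ˢ Ioc a b) := by
    rw [LDm, Measure.prod_restrict]
  rw [this]
  filter_upwards [ae_restrict_mem (measurableSet_Ioc.prod measurableSet_Ioc)] with p hp
  exact hp

namespace LDBM2

lemma of_bddMeas2 {k l : ℕ} {F : ℝ → ℝ → Matrix (Fin k) (Fin l) ℝ} (hF : BddMeas2 a b F)
    (i : Fin k) (j : Fin l) : LDBM2 a b fun p => F p.1 p.2 i j := by
  obtain ⟨hm, C, hC⟩ := hF
  refine ⟨(hm i j).aestronglyMeasurable, C, ?_⟩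
  filter_upwards [LDm_prod_ae_mem] with p hp
  exact hC p.1 (Ioc_subset_Icc_self hp.1) p.2 (Ioc_subset_Icc_self hp.2) i j

lemma of_continuous {f : ℝ × ℝ → ℝ} (hf : Continuous f) : LDBM2 a b f := by
  obtain ⟨C, hC⟩ := (isCompact_Icc.prod isCompact_Icc).exists_bound_of_continuousOn
    (hf.continuousOn (s := Icc a b ×ˢ Icc a b))
  refine ⟨hf.aestronglyMeasurable, C, ?_⟩
  filter_upwards [LDm_prod_ae_mem] with p hp
  simpa using hC p (mem_prod.2 ⟨Ioc_subset_Icc_self hp.1, Ioc_subset_Icc_self hp.2⟩)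

end LDBM2

end LDaux
section LDcore

variable {a b : ℝ}

lemma LD_dot_mulVec_comm {n m : ℕ} (c : Fin n → ℝ) (M : Matrix (Fin n) (Fin m) ℝ)
    (d : Fin m → ℝ) : c ⬝ᵥ M.mulVec d = d ⬝ᵥ (Mᵀ).mulVec c := by
  rw [Matrix.dotProduct_mulVec, Matrix.mulVec_transpose, dotProduct_comm]

lemma LD_dot_int {k : ℕ} (μ : MeasureTheory.Measure ℝ) (c : Fin k → ℝ) (F : ℝ → Fin k → ℝ)
    (hF : ∀ p, Integrable (fun s => F s p) μ) :
    (c ⬝ᵥ fun p => ∫ s, F s p ∂μ) = ∫ s, c ⬝ᵥ F s ∂μ := by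
  simp only [dotProduct]
  rw [MeasureTheory.integral_finset_sum _ fun p _ => (hF p).const_mul (c p)]
  exact Finset.sum_congr rfl fun p _ => (MeasureTheory.integral_const_mul _ _).symm

lemma LD_int_left {s : ℝ} (hs : s ∈ Ioc a b) (h : ℝ → ℝ) :
    ∫ η in a..s, h η = ∫ η, (if η ≤ s then h η else 0) ∂(LDm a b) := by
  have h1 : Iic s ∩ Ioc a b = Ioc a s := by
    ext η
    simp only [mem_inter_iff, mem_Iic, mem_Ioc]
    exact ⟨fun ⟨h1, h2, _⟩ => ⟨h2, h1⟩, fun ⟨h1, h2⟩ => ⟨h2, h1, h2.trans hs.2⟩⟩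
  rw [intervalIntegral.integral_of_le hs.1.le,
    show (fun η => if η ≤ s then h η else 0) = (Iic s).indicator h from
      funext fun η => by simp [Set.indicator_apply],
    MeasureTheory.integral_indicator measurableSet_Iic, LDm,
    Measure.restrict_restrict measurableSet_Iic, h1]

lemma LD_int_right {η : ℝ} (hη : η ∈ Ioc a b) (h : ℝ → ℝ) :
    ∫ s in η..b, h s = ∫ s, (if η ≤ s then h s else 0) ∂(LDm a b) := by
  have h1 : Ici η ∩ Ioc a b = Icc η b := by
    ext s
    simp only [mem_inter_iff, mem_Ici, mem_Ioc, mem_Icc]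
    exact ⟨fun ⟨h1, _, h3⟩ => ⟨h1, h3⟩, fun ⟨h1, h2⟩ => ⟨h1, hη.1.trans_le h1, h2⟩⟩
  have h2 : volume.restrict (Ioc η b) = volume.restrict (Icc η b) :=
    Measure.restrict_congr_set MeasureTheory.Ioc_ae_eq_Icc
  rw [intervalIntegral.integral_of_le hη.2,
    show (fun s => if η ≤ s then h s else 0) = (Ici η).indicator h from
      funext fun s => by simp [Set.indicator_apply],
    MeasureTheory.integral_indicator measurableSet_Ici, LDm,
    Measure.restrict_restrict measurableSet_Ici, h1, ← h2]

/-- Integrability of a truncated product kernel on the square. -/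
lemma LD_ker_int {c : ℝ × ℝ → Prop} [DecidablePred c] (hc : MeasurableSet {p : ℝ × ℝ | c p})
    {k : ℝ × ℝ → ℝ} (hk : LDBM2 a b k)
    {u v : ℝ → ℝ} (hu : Integrable u (LDm a b)) (hv : Integrable v (LDm a b)) :
    Integrable (fun p : ℝ × ℝ => if c p then k p * (u p.1 * v p.2) else 0)
      ((LDm a b).prod (LDm a b)) := by
  have huv : Integrable (fun p : ℝ × ℝ => u p.1 * v p.2) ((LDm a b).prod (LDm a b)) :=
    hu.mul_prod hv
  obtain ⟨C, hC⟩ := hk.2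
  have hbase : Integrable (fun p : ℝ × ℝ => k p * (u p.1 * v p.2)) ((LDm a b).prod (LDm a b)) :=
    huv.bdd_mul hk.1 (hC.mono fun p h => by simpa using h)
  have : (fun p : ℝ × ℝ => if c p then k p * (u p.1 * v p.2) else 0)
      = {p : ℝ × ℝ | c p}.indicator (fun p => k p * (u p.1 * v p.2)) :=
    funext fun p => by simp [Set.indicator_apply]
  rw [this]
  exact hbase.indicator hc

lemma LD_meas_le : MeasurableSet {p : ℝ × ℝ | p.2 ≤ p.1} :=
  measurableSet_le measurable_snd measurable_fst

lemma LD_meas_ge : MeasurableSet {p : ℝ × ℝ | p.1 ≤ p.2} :=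
  measurableSet_le measurable_fst measurable_snd

/-- Integrability of the marginal `s ↦ ∫_a^s K(s,η) g(η) dη`. -/
lemma LD_marg_left {n m : ℕ} (K : ℝ → ℝ → Matrix (Fin n) (Fin m) ℝ)
    (hK : ∀ i j, LDBM2 a b fun p => K p.1 p.2 i j)
    (g : ℝ → Fin m → ℝ) (hg : ∀ j, Integrable (fun s => g s j) (LDm a b)) (i : Fin n) :
    Integrable (fun s => ∫ η in a..s, (K s η).mulVec (g η) i) (LDm a b) := by
  set μ := LDm a b
  have hΦ : Integrable (fun p : ℝ × ℝ =>
      if p.2 ≤ p.1 then (K p.1 p.2).mulVec (g p.2) i else 0) (μ.prod μ) := by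
    have : (fun p : ℝ × ℝ => if p.2 ≤ p.1 then (K p.1 p.2).mulVec (g p.2) i else 0)
        = fun p => ∑ j, if p.2 ≤ p.1 then K p.1 p.2 i j * (1 * g p.2 j) else 0 := by
      funext p
      by_cases hc : p.2 ≤ p.1 <;> simp [hc, Matrix.mulVec, dotProduct]
    rw [this]
    exact MeasureTheory.integrable_finset_sum _ fun j _ =>
      LD_ker_int LD_meas_le (hK i j) (integrable_const 1) (hg j)
  refine (hΦ.integral_prod_left).congr ?_
  filter_upwards [ae_restrict_mem measurableSet_Ioc] with s hs
  exact (LD_int_left hs _).symm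

/-- Integrability of the marginal `s ↦ ∫_s^b K(s,η) g(η) dη`. -/
lemma LD_marg_right {n m : ℕ} (K : ℝ → ℝ → Matrix (Fin n) (Fin m) ℝ)
    (hK : ∀ i j, LDBM2 a b fun p => K p.1 p.2 i j)
    (g : ℝ → Fin m → ℝ) (hg : ∀ j, Integrable (fun s => g s j) (LDm a b)) (i : Fin n) :
    Integrable (fun s => ∫ η in s..b, (K s η).mulVec (g η) i) (LDm a b) := by
  set μ := LDm a b
  have hΦ : Integrable (fun p : ℝ × ℝ =>
      if p.1 ≤ p.2 then (K p.1 p.2).mulVec (g p.2) i else 0) (μ.prod μ) := by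
    have : (fun p : ℝ × ℝ => if p.1 ≤ p.2 then (K p.1 p.2).mulVec (g p.2) i else 0)
        = fun p => ∑ j, if p.1 ≤ p.2 then K p.1 p.2 i j * (1 * g p.2 j) else 0 := by
      funext p
      by_cases hc : p.1 ≤ p.2 <;> simp [hc, Matrix.mulVec, dotProduct]
    rw [this]
    exact MeasureTheory.integrable_finset_sum _ fun j _ =>
      LD_ker_int LD_meas_ge (hK i j) (integrable_const 1) (hg j)
  refine (hΦ.integral_prod_left).congr ?_
  filter_upwards [ae_restrict_mem measurableSet_Ioc] with s hs
  exact (LD_int_right hs _).symm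

/-- The core Fubini swap for kernel operators. -/
lemma LD_core {n m : ℕ} (K : ℝ → ℝ → Matrix (Fin n) (Fin m) ℝ)
    (hK : ∀ i j, LDBM2 a b fun p => K p.1 p.2 i j)
    (f : ℝ → Fin n → ℝ) (g : ℝ → Fin m → ℝ)
    (hf : ∀ i, Integrable (fun s => f s i) (LDm a b))
    (hg : ∀ j, Integrable (fun s => g s j) (LDm a b)) :
    Integrable (fun s => f s ⬝ᵥ (fun i => ∫ η in a..s, (K s η).mulVec (g η) i)) (LDm a b) ∧
    Integrable (fun η => (fun j => ∫ s in η..b, ((K s η)ᵀ).mulVec (f s) j) ⬝ᵥ g η) (LDm a b) ∧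
    (∫ s, f s ⬝ᵥ (fun i => ∫ η in a..s, (K s η).mulVec (g η) i) ∂(LDm a b))
      = ∫ η, (fun j => ∫ s in η..b, ((K s η)ᵀ).mulVec (f s) j) ⬝ᵥ g η ∂(LDm a b) := by
  classical
  set μ := LDm a b with hμ
  set Φ : ℝ × ℝ → ℝ :=
    fun p => if p.2 ≤ p.1 then f p.1 ⬝ᵥ (K p.1 p.2).mulVec (g p.2) else 0 with hΦdef
  -- integrability of Φ
  have hΦ : Integrable Φ (μ.prod μ) := by
    have : Φ = fun p => ∑ i, ∑ j, if p.2 ≤ p.1 then K p.1 p.2 i j * (f p.1 i * g p.2 j) else 0 := by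
      funext p
      by_cases hc : p.2 ≤ p.1 <;>
        simp [hΦdef, hc, Matrix.mulVec, dotProduct, Finset.mul_sum, mul_comm, mul_left_comm]
    rw [this]
    exact MeasureTheory.integrable_finset_sum _ fun i _ =>
      MeasureTheory.integrable_finset_sum _ fun j _ =>
        LD_ker_int LD_meas_le (hK i j) (hf i) (hg j)
  have hΨ : ∀ (i : Fin n) (j : Fin m), Integrable
      (fun p : ℝ × ℝ => if p.2 ≤ p.1 then K p.1 p.2 i j * (1 * g p.2 j) else 0) (μ.prod μ) :=
    fun i j => LD_ker_int LD_meas_le (hK i j) (integrable_const 1) (hg j)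
  have hΨ' : ∀ (i : Fin n) (j : Fin m), Integrable
      (fun p : ℝ × ℝ => if p.2 ≤ p.1 then K p.1 p.2 i j * (f p.1 i * 1) else 0) (μ.prod μ) :=
    fun i j => LD_ker_int LD_meas_le (hK i j) (hf i) (integrable_const 1)
  -- left marginal identification
  have hslice : ∀ᵐ s ∂μ, ∀ (i : Fin n) (j : Fin m),
      Integrable (fun η => if η ≤ s then K s η i j * (1 * g η j) else 0) μ := by
    rw [MeasureTheory.ae_all_iff]
    intro i
    rw [MeasureTheory.ae_all_iff]
    intro j
    exact (hΨ i j).prod_right_ae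
  have hL : (fun s => f s ⬝ᵥ (fun i => ∫ η in a..s, (K s η).mulVec (g η) i))
      =ᵐ[μ] fun s => ∫ η, Φ (s, η) ∂μ := by
    filter_upwards [ae_restrict_mem measurableSet_Ioc, hslice] with s hs hsl
    have e1 : (fun i => ∫ η in a..s, (K s η).mulVec (g η) i)
        = fun i => ∫ η, (if η ≤ s then (K s η).mulVec (g η) i else 0) ∂μ :=
      funext fun i => LD_int_left hs _
    rw [e1, LD_dot_int μ (f s) _ ?_]
    · exact MeasureTheory.integral_congr_ae (Filter.Eventually.of_forall fun η => by
        by_cases hc : η ≤ s <;> simp [hΦdef, hc, dotProduct])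
    · intro i
      have : (fun η => if η ≤ s then (K s η).mulVec (g η) i else 0)
          = fun η => ∑ j, if η ≤ s then K s η i j * (1 * g η j) else 0 := by
        funext η
        by_cases hc : η ≤ s <;> simp [hc, Matrix.mulVec, dotProduct]
      rw [this]
      exact MeasureTheory.integrable_finset_sum _ fun j _ => hsl i j
  -- right marginal identification
  have hslice' : ∀ᵐ η ∂μ, ∀ (i : Fin n) (j : Fin m),
      Integrable (fun s => if η ≤ s then K s η i j * (f s i * 1) else 0) μ := by
    rw [MeasureTheory.ae_all_iff]
    intro i
    rw [MeasureTheory.ae_all_iff]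
    intro j
    exact (hΨ' i j).prod_left_ae
  have hR : (fun η => (fun j => ∫ s in η..b, ((K s η)ᵀ).mulVec (f s) j) ⬝ᵥ g η)
      =ᵐ[μ] fun η => ∫ s, Φ (s, η) ∂μ := by
    filter_upwards [ae_restrict_mem measurableSet_Ioc, hslice'] with η hη hsl
    have e1 : (fun j => ∫ s in η..b, ((K s η)ᵀ).mulVec (f s) j)
        = fun j => ∫ s, (if η ≤ s then ((K s η)ᵀ).mulVec (f s) j else 0) ∂μ :=
      funext fun j => LD_int_right hη _
    rw [e1, dotProduct_comm, LD_dot_int μ (g η) _ ?_]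
    · exact MeasureTheory.integral_congr_ae (Filter.Eventually.of_forall fun s => by
        by_cases hc : η ≤ s
        · simp only [hΦdef, if_pos hc]
          show g η ⬝ᵥ (K s η)ᵀ.mulVec (f s) = f s ⬝ᵥ (K s η).mulVec (g η)
          rw [LD_dot_mulVec_comm, Matrix.transpose_transpose]
        · simp [hΦdef, hc, dotProduct])
    · intro j
      have : (fun s => if η ≤ s then ((K s η)ᵀ).mulVec (f s) j else 0)
          = fun s => ∑ i, if η ≤ s then K s η i j * (f s i * 1) else 0 := by
        funext s
        by_cases hc : η ≤ s <;> simp [hc, Matrix.mulVec, dotProduct, Matrix.transpose_apply]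
      rw [this]
      exact MeasureTheory.integrable_finset_sum _ fun i _ => hsl i j
  refine ⟨hΦ.integral_prod_left.congr hL.symm, hΦ.integral_prod_right.congr hR.symm, ?_⟩
  rw [MeasureTheory.integral_congr_ae hL, MeasureTheory.integral_congr_ae hR]
  have huncurry : Function.uncurry (fun s η => Φ (s, η)) = Φ := by
    funext p; simp [Function.uncurry]
  exact MeasureTheory.integral_integral_swap (by rw [huncurry]; exact hΦ)

end LDcore
section LDftc

variable {a b : ℝ} {k : ℕ}

lemma LD_comp_contOn {f : ℝ → Fin k → ℝ} {f' : ℝ → Fin k → ℝ}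
    (hf : ∀ s ∈ Icc a b, HasDerivWithinAt f (f' s) (Icc a b) s) (i : Fin k) :
    ContinuousOn (fun s => f s i) (Icc a b) :=
  (continuous_apply i).comp_continuousOn (fun s hs => (hf s hs).continuousWithinAt)

lemma LD_comp_deriv {f f' : ℝ → Fin k → ℝ}
    (hf : ∀ s ∈ Icc a b, HasDerivWithinAt f (f' s) (Icc a b) s)
    {x : ℝ} (hx : x ∈ Icc a b) (hxb : x < b) (i : Fin k) :
    HasDerivWithinAt (fun t => f t i) (f' x i) (Ioi x) x := by
  have h1 : HasDerivWithinAt (fun t => f t i) (f' x i) (Icc a b) x :=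
    hasDerivWithinAt_pi.1 (hf x hx) i
  refine h1.mono_of_mem_nhdsWithin ?_
  exact Filter.mem_of_superset (Ioc_mem_nhdsGT_of_mem ⟨le_refl x, hxb⟩)
    (Ioc_subset_Icc_self.trans (Icc_subset_Icc hx.1 le_rfl))

/-- FTC: `∫_a^s f' = f s - f a` componentwise. -/
lemma LD_ftc {f f' : ℝ → Fin k → ℝ}
    (hf : ∀ s ∈ Icc a b, HasDerivWithinAt f (f' s) (Icc a b) s)
    (hf'i : ∀ i, IntegrableOn (fun η => f' η i) (Ioc a b) volume)
    {s : ℝ} (hs : s ∈ Icc a b) (i : Fin k) :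
    ∫ η in a..s, f' η i = f s i - f a i := by
  refine intervalIntegral.integral_eq_sub_of_hasDeriv_right_of_le (f := fun t => f t i)
    (f' := fun t => f' t i) hs.1
    ((LD_comp_contOn hf i).mono (Icc_subset_Icc le_rfl hs.2)) (fun x hx => ?_) ?_
  · exact LD_comp_deriv hf ⟨hx.1.le, hx.2.le.trans hs.2⟩ (hx.2.trans_le hs.2) i
  · rw [intervalIntegrable_iff_integrableOn_Ioc_of_le hs.1]
    exact (hf'i i).mono_set (Ioc_subset_Ioc le_rfl hs.2)

/-- Taylor with integral remainder, componentwise. -/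
lemma LD_taylor {z zs zss : ℝ → Fin k → ℝ}
    (hz : ∀ s ∈ Icc a b, HasDerivWithinAt z (zs s) (Icc a b) s)
    (hzs : ∀ s ∈ Icc a b, HasDerivWithinAt zs (zss s) (Icc a b) s)
    (hzssi : ∀ i, IntegrableOn (fun η => zss η i) (Ioc a b) volume)
    {s : ℝ} (hs : s ∈ Icc a b) (i : Fin k) :
    ∫ η in a..s, (s - η) * zss η i = z s i - z a i - (s - a) * zs a i := by
  have key : ∫ η in a..s, (s - η) * zss η i
      = ((s - s) * zs s i + z s i) - ((s - a) * zs a i + z a i) := by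
    refine intervalIntegral.integral_eq_sub_of_hasDeriv_right_of_le
      (f := fun η => (s - η) * zs η i + z η i) (f' := fun η => (s - η) * zss η i)
      hs.1 ?_ (fun x hx => ?_) ?_
    · refine ContinuousOn.add (ContinuousOn.mul ?_ ?_) ?_
      · exact (continuous_const.sub continuous_id).continuousOn
      · exact (LD_comp_contOn hzs i).mono (Icc_subset_Icc le_rfl hs.2)
      · exact (LD_comp_contOn hz i).mono (Icc_subset_Icc le_rfl hs.2)
    · have hxm : x ∈ Icc a b := ⟨hx.1.le, hx.2.le.trans hs.2⟩
      have hxb : x < b := hx.2.trans_le hs.2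
      have h1 : HasDerivWithinAt (fun η => (s - η)) (-1) (Ioi x) x :=
        ((hasDerivAt_id x).const_sub s).hasDerivWithinAt
      have h2 := LD_comp_deriv hzs hxm hxb i
      have h3 := LD_comp_deriv hz hxm hxb i
      have := (h1.mul h2).add h3
      convert this using 1
      · rfl
      ring
    · rw [intervalIntegrable_iff_integrableOn_Ioc_of_le hs.1]
      have hgi : IntegrableOn (fun η => zss η i) (Ioc a s) volume :=
        (hzssi i).mono_set (Ioc_subset_Ioc le_rfl hs.2)
      refine hgi.bdd_mul (c := |s| + |a| + |b|)
        (continuous_const.sub continuous_id).aestronglyMeasurable ?_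
      filter_upwards [ae_restrict_mem measurableSet_Ioc] with η hη
      have h1 : a < η := hη.1
      have h2 : η ≤ s := hη.2
      rw [Real.norm_eq_abs]
      have h3 : |s - η| = s - η := abs_of_nonneg (by linarith)
      have h4 := le_abs_self s
      have h5 := neg_abs_le a
      have h6 := abs_nonneg b
      rw [h3]
      linarith
  rw [key]
  ring
end LDftc
section LDcont

variable {a b : ℝ} {np pp : ℕ} {Bc : Matrix (Fin 2 × Fin np) (Fin 4 × Fin np) ℝ}

lemma LD_colE_cont (p : Fin 4 × Fin np) (j : Fin np) :
    Continuous fun η => colE b np η p j := by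
  obtain ⟨kk, i⟩ := p
  simp only [colE, Matrix.of_apply]
  fin_cases kk
  · show Continuous fun _ : ℝ => (0 : Matrix (Fin np) (Fin np) ℝ) i j; fun_prop
  · show Continuous fun η : ℝ => ((b - η) • (1 : Matrix (Fin np) (Fin np) ℝ)) i j
    simp only [Matrix.smul_apply, smul_eq_mul]
    fun_prop
  · show Continuous fun _ : ℝ => (0 : Matrix (Fin np) (Fin np) ℝ) i j; fun_prop
  · show Continuous fun _ : ℝ => (1 : Matrix (Fin np) (Fin np) ℝ) i j; fun_prop

lemma LD_rowIA_cont (i : Fin np) (q : Fin 2 × Fin np) :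
    Continuous fun s => rowIA a np s i q := by
  obtain ⟨kk, jj⟩ := q
  simp only [rowIA, Matrix.of_apply]
  fin_cases kk
  · show Continuous fun _ : ℝ => (1 : Matrix (Fin np) (Fin np) ℝ) i jj; fun_prop
  · show Continuous fun s : ℝ => ((s - a) • (1 : Matrix (Fin np) (Fin np) ℝ)) i jj
    simp only [Matrix.smul_apply, smul_eq_mul]
    fun_prop

lemma LD_Bf_cont (q : Fin 2 × Fin np) (j : Fin np) :
    Continuous fun η => Bfm a b Bc η q j := by
  have h : ∀ η, Bfm a b Bc η q j
      = ∑ p, ((Bc * Bdm a b np)⁻¹ * Bc) q p * colE b np η p j := by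
    intro η
    rw [Bfm, Matrix.mul_apply]
  simp only [h]
  exact continuous_finset_sum _ fun p _ => continuous_const.mul (LD_colE_cont p j)

lemma LD_Bam_cont (i j : Fin np) :
    Continuous fun p : ℝ × ℝ => Bam a b Bc p.1 p.2 i j := by
  have h : ∀ p : ℝ × ℝ, Bam a b Bc p.1 p.2 i j
      = -∑ q, rowIA a np p.1 i q * Bfm a b Bc p.2 q j := by
    intro p
    rw [Bam, Matrix.neg_apply, Matrix.mul_apply]
  simp only [h]
  exact (continuous_finset_sum _ fun q _ =>
    ((LD_rowIA_cont i q).comp continuous_fst).mul ((LD_Bf_cont q j).comp continuous_snd)).neg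

lemma LD_Bb_cont (i j : Fin np) :
    Continuous fun η : ℝ => Bbm a b Bc η i j := by
  have h : ∀ η : ℝ, Bbm a b Bc η i j = -∑ q, rowZI np i q * Bfm a b Bc η q j := by
    intro η
    rw [Bbm, Matrix.neg_apply, Matrix.mul_apply]
  simp only [h]
  exact (continuous_finset_sum _ fun q _ => continuous_const.mul (LD_Bf_cont q j)).neg

lemma LD_G1_cont (i j : Fin np) :
    Continuous fun p : ℝ × ℝ => G1m a b Bc p.1 p.2 i j := by
  have h : ∀ p : ℝ × ℝ, G1m a b Bc p.1 p.2 i j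
      = Bam a b Bc p.1 p.2 i j + (p.1 - p.2) * (1 : Matrix (Fin np) (Fin np) ℝ) i j := by
    intro p
    rw [G1m, Matrix.add_apply, Matrix.smul_apply, smul_eq_mul]
  simp only [h]
  exact (LD_Bam_cont i j).add (((continuous_fst.sub continuous_snd)).mul continuous_const)

lemma LD_G2_cont (i j : Fin np) :
    Continuous fun p : ℝ × ℝ => G2m a b Bc p.1 p.2 i j := LD_Bam_cont i j

lemma LD_G3_cont (i j : Fin np) :
    Continuous fun p : ℝ × ℝ => G3m a b Bc p.1 p.2 i j := by
  have h : ∀ p : ℝ × ℝ, G3m a b Bc p.1 p.2 i j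
      = Bbm a b Bc p.2 i j + (1 : Matrix (Fin np) (Fin np) ℝ) i j := by
    intro p
    rw [G3m, Matrix.add_apply]
  simp only [h]
  exact ((LD_Bb_cont i j).comp continuous_snd).add continuous_const

lemma LD_G4_cont (i j : Fin np) :
    Continuous fun p : ℝ × ℝ => G4m a b Bc p.1 p.2 i j :=
  (LD_Bb_cont i j).comp continuous_snd

lemma LD_C3_cont (C1 : Matrix (Fin pp) (Fin 4 × Fin np) ℝ) (i : Fin pp) (j : Fin np) :
    Continuous fun s : ℝ => C3m a b Bc C1 s i j := by
  have h : ∀ s : ℝ, C3m a b Bc C1 s i j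
      = -∑ q, (C1 * Bdm a b np) i q * Bfm a b Bc s q j + ∑ p, C1 i p * colE b np s p j := by
    intro s
    rw [C3m, Matrix.add_apply, Matrix.neg_apply, Matrix.mul_apply, Matrix.mul_apply]
  simp only [h]
  refine Continuous.add (Continuous.neg ?_) ?_
  · exact continuous_finset_sum _ fun q _ => continuous_const.mul (LD_Bf_cont q j)
  · exact continuous_finset_sum _ fun p _ => continuous_const.mul (LD_colE_cont p j)

lemma LD_Bam_cont_right (s : ℝ) (i j : Fin np) :
    Continuous fun η => Bam a b Bc s η i j := by
  have h : ∀ η, Bam a b Bc s η i j = -∑ q, rowIA a np s i q * Bfm a b Bc η q j := by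
    intro η
    rw [Bam, Matrix.neg_apply, Matrix.mul_apply]
  simp only [h]
  exact (continuous_finset_sum _ fun q _ => continuous_const.mul (LD_Bf_cont q j)).neg

/-- interval integrability of `η ↦ (M η *ᵥ g η) i` for continuous-entry `M` and `L¹` `g`. -/
lemma LD_ii_mulVec {k l : ℕ} {M : ℝ → Matrix (Fin k) (Fin l) ℝ}
    (hM : ∀ i j, Continuous fun η => M η i j) {g : ℝ → Fin l → ℝ}
    (hg : ∀ j, IntegrableOn (fun η => g η j) (Ioc a b) volume)
    {c d : ℝ} (hc : a ≤ c) (hcd : c ≤ d) (hd : d ≤ b) (i : Fin k) :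
    IntervalIntegrable (fun η => (M η).mulVec (g η) i) volume c d := by
  rw [intervalIntegrable_iff_integrableOn_Ioc_of_le hcd]
  have hsub : Ioc c d ⊆ Ioc a b := Ioc_subset_Ioc hc hd
  have h : (fun η => (M η).mulVec (g η) i) = fun η => ∑ j, M η i j * g η j :=
    funext fun η => by simp [Matrix.mulVec, dotProduct]
  rw [h]
  refine MeasureTheory.integrable_finset_sum _ fun j _ => ?_
  have hgj : IntegrableOn (fun η => g η j) (Ioc c d) := (hg j).mono_set hsub
  obtain ⟨C, hC⟩ := isCompact_Icc.exists_bound_of_continuousOn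
    ((hM i j).continuousOn (s := Icc a b))
  refine hgj.bdd_mul (c := C) (hM i j).aestronglyMeasurable ?_
  filter_upwards [ae_restrict_mem measurableSet_Ioc] with η hη
  exact hC η ⟨hc.trans hη.1.le, hη.2.trans hd⟩

end LDcont
section LDhelp

variable {a b : ℝ}

lemma LDBM.of_continuousOn {f : ℝ → ℝ} (hf : ContinuousOn f (Icc a b)) : LDBM a b f := by
  obtain ⟨C, hC⟩ := isCompact_Icc.exists_bound_of_continuousOn hf
  refine ⟨((hf.aestronglyMeasurable measurableSet_Icc).mono_measure
    (Measure.restrict_mono Ioc_subset_Icc_self le_rfl)), C, ?_⟩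
  filter_upwards [ae_restrict_mem measurableSet_Ioc] with s hs
  simpa using hC s (Ioc_subset_Icc_self hs)

lemma LD_ii2m (hab : a ≤ b) (h : ℝ → ℝ) :
    ∫ s in a..b, h s = ∫ s, h s ∂(LDm a b) := by
  rw [intervalIntegral.integral_of_le hab]; rfl

/-- Integrability over `LDm` of `(M · *ᵥ g ·) i` with `LDBM` entries. -/
lemma LD_bm_mulVec_int {ι κ : Type*} [Fintype ι] [Fintype κ]
    {M : ℝ → Matrix ι κ ℝ} (hM : ∀ i j, LDBM a b fun s => M s i j)
    {g : ℝ → κ → ℝ} (hg : ∀ j, Integrable (fun s => g s j) (LDm a b)) (i : ι) :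
    Integrable (fun s => (M s).mulVec (g s) i) (LDm a b) := by
  have h : (fun s => (M s).mulVec (g s) i) = fun s => ∑ j, M s i j * g s j :=
    funext fun s => by simp [Matrix.mulVec, dotProduct]
  rw [h]
  exact MeasureTheory.integrable_finset_sum _ fun j _ => (hM i j).mul_integrable (hg j)

lemma LD_cont_mulVec_int {ι κ : Type*} [Fintype ι] [Fintype κ]
    {M : ℝ → Matrix ι κ ℝ} (hM : ∀ i j, Continuous fun s => M s i j)
    {g : ℝ → κ → ℝ} (hg : ∀ j, Integrable (fun s => g s j) (LDm a b)) (i : ι) :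
    Integrable (fun s => (M s).mulVec (g s) i) (LDm a b) :=
  LD_bm_mulVec_int (fun i j => LDBM.of_continuous (hM i j)) hg i

lemma LDBM.matmul {ι κ τ : Type*} [Fintype ι] [Fintype κ] [Fintype τ]
    {M : ℝ → Matrix ι κ ℝ} {N : ℝ → Matrix κ τ ℝ}
    (hM : ∀ i j, LDBM a b fun s => M s i j) (hN : ∀ i j, LDBM a b fun s => N s i j)
    (i : ι) (j : τ) : LDBM a b fun s => (M s * N s) i j := by
  have h : (fun s => (M s * N s) i j) = fun s => ∑ l, M s i l * N s l j :=
    funext fun s => by rw [Matrix.mul_apply]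
  rw [h]
  exact LDBM.sum _ fun l _ => (hM i l).mul (hN l j)

lemma LDBM.constM {ι κ : Type*} [Fintype ι] [Fintype κ] (M : Matrix ι κ ℝ) (i : ι) (j : κ) :
    LDBM a b fun _ : ℝ => M i j := LDBM.const _

/-- generalized dot-integral exchange. -/
lemma LD_dot_int' {ι : Type*} [Fintype ι] (μ : MeasureTheory.Measure ℝ) (c : ι → ℝ)
    (F : ℝ → ι → ℝ) (hF : ∀ p, Integrable (fun s => F s p) μ) :
    (c ⬝ᵥ fun p => ∫ s, F s p ∂μ) = ∫ s, c ⬝ᵥ F s ∂μ := by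
  simp only [dotProduct]
  rw [MeasureTheory.integral_finset_sum _ fun p _ => (hF p).const_mul (c p)]
  exact Finset.sum_congr rfl fun p _ => (MeasureTheory.integral_const_mul _ _).symm

/-- `c ⬝ᵥ M *ᵥ d` integrable when `c ∈ L¹`, `M` entries `LDBM`, `d` entries `LDBM`. -/
lemma LD_int_dot_mulVec {ι κ : Type*} [Fintype ι] [Fintype κ]
    {c : ℝ → ι → ℝ} (hc : ∀ i, Integrable (fun s => c s i) (LDm a b))
    {M : ℝ → Matrix ι κ ℝ} (hM : ∀ i j, LDBM a b fun s => M s i j)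
    {d : ℝ → κ → ℝ} (hd : ∀ j, LDBM a b fun s => d s j) :
    Integrable (fun s => c s ⬝ᵥ (M s).mulVec (d s)) (LDm a b) := by
  have h : (fun s => c s ⬝ᵥ (M s).mulVec (d s))
      = fun s => ∑ i, ∑ j, (M s i j * d s j) * c s i := by
    funext s
    simp only [dotProduct, Matrix.mulVec, Finset.mul_sum]
    exact Finset.sum_congr rfl fun i _ => Finset.sum_congr rfl fun j _ => by ring
  rw [h]
  exact MeasureTheory.integrable_finset_sum _ fun i _ =>
    MeasureTheory.integrable_finset_sum _ fun j _ => ((hM i j).mul (hd j)).mul_integrable (hc i)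

/-- interval integrability scalar version. -/
lemma LD_ii_smul {h g : ℝ → ℝ} (hh : Continuous h) (hg : IntegrableOn g (Ioc a b) volume)
    {c d : ℝ} (hc : a ≤ c) (hcd : c ≤ d) (hd : d ≤ b) :
    IntervalIntegrable (fun η => h η * g η) volume c d := by
  rw [intervalIntegrable_iff_integrableOn_Ioc_of_le hcd]
  have hgj : IntegrableOn g (Ioc c d) := hg.mono_set (Ioc_subset_Ioc hc hd)
  obtain ⟨C, hC⟩ := isCompact_Icc.exists_bound_of_continuousOn
    (hh.continuousOn (s := Icc a b))
  refine hgj.bdd_mul (c := C) hh.aestronglyMeasurable ?_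
  filter_upwards [ae_restrict_mem measurableSet_Ioc] with η hη
  exact hC η ⟨hc.trans hη.1.le, hη.2.trans hd⟩

/-- block computations -/
lemma LD_rowIA_mulVec {np : ℕ} (s : ℝ) (w : Fin 2 × Fin np → ℝ) (i : Fin np) :
    (rowIA a np s).mulVec w i = w (0, i) + (s - a) * w (1, i) := by
  simp only [Matrix.mulVec, dotProduct, rowIA, Matrix.of_apply, Fintype.sum_prod_type,
    Fin.sum_univ_two, Matrix.cons_val_zero, Matrix.cons_val_one, Matrix.head_cons,
    Matrix.one_apply, Matrix.smul_apply, smul_eq_mul, ite_mul, one_mul, zero_mul,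
    Finset.sum_ite_eq, Finset.mem_univ, if_true, mul_ite, mul_zero]
  ring

lemma LD_rowZI_mulVec {np : ℕ} (w : Fin 2 × Fin np → ℝ) (i : Fin np) :
    (rowZI np).mulVec w i = w (1, i) := by
  simp only [Matrix.mulVec, dotProduct, rowZI, Matrix.of_apply, Fintype.sum_prod_type,
    Fin.sum_univ_two, Matrix.cons_val_zero, Matrix.cons_val_one, Matrix.head_cons,
    Matrix.one_apply, Matrix.zero_apply, ite_mul, one_mul, zero_mul,
    Finset.sum_ite_eq, Finset.mem_univ, if_true, Finset.sum_const_zero, zero_add]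

lemma LD_Bdm_mulVec {np : ℕ} (w : Fin 2 × Fin np → ℝ) (i : Fin np) :
    (Bdm a b np).mulVec w (0, i) = w (0, i)
    ∧ (Bdm a b np).mulVec w (1, i) = w (0, i) + (b - a) * w (1, i)
    ∧ (Bdm a b np).mulVec w (2, i) = w (1, i)
    ∧ (Bdm a b np).mulVec w (3, i) = w (1, i) := by
  refine ⟨?_, ?_, ?_, ?_⟩ <;>
  · simp only [Matrix.mulVec, dotProduct, Bdm, Matrix.of_apply, Fintype.sum_prod_type,
      Fin.sum_univ_two, Matrix.cons_val_zero, Matrix.cons_val_one, Matrix.head_cons,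
      Matrix.cons_val_two, Matrix.tail_cons, Matrix.cons_val_three,
      Matrix.one_apply, Matrix.zero_apply, Matrix.smul_apply, smul_eq_mul, ite_mul, one_mul,
      zero_mul, Finset.sum_ite_eq, Finset.mem_univ, if_true, Finset.sum_const_zero, zero_add,
      add_zero, mul_ite, mul_zero, mul_one]
    try ring

lemma LD_colE_mulVec {np : ℕ} (η : ℝ) (v : Fin np → ℝ) (i : Fin np) :
    (colE b np η).mulVec v (0, i) = 0
    ∧ (colE b np η).mulVec v (1, i) = (b - η) * v i
    ∧ (colE b np η).mulVec v (2, i) = 0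
    ∧ (colE b np η).mulVec v (3, i) = v i := by
  refine ⟨?_, ?_, ?_, ?_⟩ <;>
  · simp only [Matrix.mulVec, dotProduct, colE, Matrix.of_apply,
      Matrix.cons_val_zero, Matrix.cons_val_one, Matrix.head_cons,
      Matrix.cons_val_two, Matrix.tail_cons, Matrix.cons_val_three,
      Matrix.one_apply, Matrix.zero_apply, Matrix.smul_apply, smul_eq_mul, ite_mul, one_mul,
      zero_mul, Finset.sum_ite_eq, Finset.mem_univ, if_true, Finset.sum_const_zero,
      mul_ite, mul_zero, mul_one]

end LDhelp

section LDmisc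
variable {a b : ℝ}
lemma LD_cont_swap {f : ℝ × ℝ → ℝ} (hf : Continuous f) :
    Continuous fun p : ℝ × ℝ => f (p.2, p.1) :=
  hf.comp (continuous_snd.prodMk continuous_fst)

lemma LD_fun_zero {k : ℕ} : (fun _ : Fin k => (0 : ℝ)) = 0 := rfl
end LDmisc
section LDsym

variable {a b : ℝ}

lemma LD_flip_eq {np : ℕ} {R1 R2 : ℝ → ℝ → Matrix (Fin np) (Fin np) ℝ}
    (hR : ∀ s ∈ Icc a b, ∀ η ∈ Icc a b, R2 s η = (R1 η s)ᵀ)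
    (f g : ℝ → Fin np → ℝ) :
    (fun η => (fun j => ∫ s in η..b, ((R1 s η)ᵀ).mulVec (f s) j) ⬝ᵥ g η)
      =ᵐ[LDm a b] fun η => g η ⬝ᵥ (fun i => ∫ s in η..b, (R2 η s).mulVec (f s) i) := by
  filter_upwards [ae_restrict_mem measurableSet_Ioc] with η hη
  rw [dotProduct_comm]
  congr 1
  funext j
  refine intervalIntegral.integral_congr fun s hsm => ?_
  rw [uIcc_of_le hη.2] at hsm
  rw [hR η (Ioc_subset_Icc_self hη) s ⟨hη.1.le.trans hsm.1, hsm.2⟩]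

lemma LD_sym (hab : a ≤ b) {n0 np : ℕ}
    (P : Matrix (Fin n0) (Fin n0) ℝ) (hP : P.IsSymm)
    (Q : ℝ → Matrix (Fin n0) (Fin np) ℝ)
    (S : ℝ → Matrix (Fin np) (Fin np) ℝ)
    (R1 R2 : ℝ → ℝ → Matrix (Fin np) (Fin np) ℝ)
    (hQ : ∀ i j, LDBM a b fun s => Q s i j)
    (hS : ∀ i j, LDBM a b fun s => S s i j)
    (hR1 : ∀ i j, LDBM2 a b fun p => R1 p.1 p.2 i j)
    (hSsymm : ∀ s ∈ Icc a b, (S s).IsSymm)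
    (hR : ∀ s ∈ Icc a b, ∀ η ∈ Icc a b, R2 s η = (R1 η s)ᵀ)
    (x1 x2 : Fin n0 → ℝ) (f g : ℝ → Fin np → ℝ)
    (hf : ∀ i, LDBM a b fun s => f s i)
    (hg : ∀ i, Integrable (fun s => g s i) (LDm a b)) :
    innerX a b (x2, g) (Pop a b P Q (fun s => (Q s)ᵀ) S R1 R2 (x1, f))
      = innerX a b (x1, f) (Pop a b P Q (fun s => (Q s)ᵀ) S R1 R2 (x2, g)) := by
  have hfi : ∀ i, Integrable (fun s => f s i) (LDm a b) := fun i => (hf i).integrable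
  have hQt : ∀ i j, LDBM a b fun s => (Q s)ᵀ i j := fun i j => hQ j i
  have hSt : ∀ i j, LDBM a b fun s => (S s)ᵀ i j := fun i j => hS j i
  have hx1 : ∀ j : Fin n0, LDBM a b fun _ : ℝ => x1 j := fun j => LDBM.const (x1 j)
  have hx2 : ∀ j : Fin n0, LDBM a b fun _ : ℝ => x2 j := fun j => LDBM.const (x2 j)
  -- integrabilities
  have hI1 : Integrable (fun s => g s ⬝ᵥ ((Q s)ᵀ).mulVec x1) (LDm a b) :=
    LD_int_dot_mulVec hg hQt hx1
  have hI2 : Integrable (fun s => g s ⬝ᵥ (S s).mulVec (f s)) (LDm a b) :=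
    LD_int_dot_mulVec hg hS hf
  have hI3 : Integrable
      (fun s => g s ⬝ᵥ (fun i => ∫ η in a..s, (R1 s η).mulVec (f η) i)) (LDm a b) :=
    (LD_core R1 hR1 g f hg hfi).1
  have hI4 : Integrable
      (fun s => g s ⬝ᵥ (fun i => ∫ η in s..b, (R2 s η).mulVec (f η) i)) (LDm a b) :=
    ((LD_core R1 hR1 f g hfi hg).2.1).congr (LD_flip_eq hR f g)
  have hI1' : Integrable (fun s => f s ⬝ᵥ ((Q s)ᵀ).mulVec x2) (LDm a b) :=
    LD_int_dot_mulVec hfi hQt hx2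
  have hI2' : Integrable (fun s => f s ⬝ᵥ (S s).mulVec (g s)) (LDm a b) := by
    refine (LD_int_dot_mulVec hg hSt hf).congr (Filter.Eventually.of_forall fun s => ?_)
    exact (LD_dot_mulVec_comm _ _ _).symm
  have hI3' : Integrable
      (fun s => f s ⬝ᵥ (fun i => ∫ η in a..s, (R1 s η).mulVec (g η) i)) (LDm a b) :=
    (LD_core R1 hR1 f g hfi hg).1
  have hI4' : Integrable
      (fun s => f s ⬝ᵥ (fun i => ∫ η in s..b, (R2 s η).mulVec (g η) i)) (LDm a b) :=
    ((LD_core R1 hR1 g f hg hfi).2.1).congr (LD_flip_eq hR g f)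
  -- expansions
  have expandL :
      innerX a b (x2, g) (Pop a b P Q (fun s => (Q s)ᵀ) S R1 R2 (x1, f))
        = x2 ⬝ᵥ P.mulVec x1
          + (∫ s, f s ⬝ᵥ ((Q s)ᵀ).mulVec x2 ∂(LDm a b))
          + ((∫ s, g s ⬝ᵥ ((Q s)ᵀ).mulVec x1 ∂(LDm a b))
          + (∫ s, g s ⬝ᵥ (S s).mulVec (f s) ∂(LDm a b))
          + (∫ s, g s ⬝ᵥ (fun i => ∫ η in a..s, (R1 s η).mulVec (f η) i) ∂(LDm a b))
          + (∫ s, g s ⬝ᵥ (fun i => ∫ η in s..b, (R2 s η).mulVec (f η) i) ∂(LDm a b))) := by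
    simp only [innerX, Pop]
    rw [LD_ii2m hab]
    rw [dotProduct_add]
    congr 1
    · congr 1
      rw [show (fun i => ∫ s in a..b, (Q s).mulVec (f s) i)
          = fun i => ∫ s, (Q s).mulVec (f s) i ∂(LDm a b) from funext fun i => LD_ii2m hab _]
      rw [LD_dot_int' (LDm a b) x2 _ (fun i => LD_bm_mulVec_int hQ hfi i)]
      exact MeasureTheory.integral_congr_ae
        (Filter.Eventually.of_forall fun s => LD_dot_mulVec_comm _ _ _)
    · rw [show (fun s => g s ⬝ᵥ ((Q s)ᵀ.mulVec x1 + (S s).mulVec (f s)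
            + (fun i => ∫ η in a..s, (R1 s η).mulVec (f η) i)
            + (fun i => ∫ η in s..b, (R2 s η).mulVec (f η) i)))
          = fun s => g s ⬝ᵥ ((Q s)ᵀ).mulVec x1 + g s ⬝ᵥ (S s).mulVec (f s)
            + g s ⬝ᵥ (fun i => ∫ η in a..s, (R1 s η).mulVec (f η) i)
            + g s ⬝ᵥ (fun i => ∫ η in s..b, (R2 s η).mulVec (f η) i) from
          funext fun s => by simp only [dotProduct_add]]
      have h12 : Integrable (fun s => g s ⬝ᵥ ((Q s)ᵀ).mulVec x1
          + g s ⬝ᵥ (S s).mulVec (f s)) (LDm a b) := hI1.add hI2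
      have h123 : Integrable (fun s => g s ⬝ᵥ ((Q s)ᵀ).mulVec x1
          + g s ⬝ᵥ (S s).mulVec (f s)
          + g s ⬝ᵥ (fun i => ∫ η in a..s, (R1 s η).mulVec (f η) i)) (LDm a b) := h12.add hI3
      rw [MeasureTheory.integral_add h123 hI4, MeasureTheory.integral_add h12 hI3,
        MeasureTheory.integral_add hI1 hI2]
  have expandR :
      innerX a b (x1, f) (Pop a b P Q (fun s => (Q s)ᵀ) S R1 R2 (x2, g))
        = x1 ⬝ᵥ P.mulVec x2
          + (∫ s, g s ⬝ᵥ ((Q s)ᵀ).mulVec x1 ∂(LDm a b))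
          + ((∫ s, f s ⬝ᵥ ((Q s)ᵀ).mulVec x2 ∂(LDm a b))
          + (∫ s, f s ⬝ᵥ (S s).mulVec (g s) ∂(LDm a b))
          + (∫ s, f s ⬝ᵥ (fun i => ∫ η in a..s, (R1 s η).mulVec (g η) i) ∂(LDm a b))
          + (∫ s, f s ⬝ᵥ (fun i => ∫ η in s..b, (R2 s η).mulVec (g η) i) ∂(LDm a b))) := by
    simp only [innerX, Pop]
    rw [LD_ii2m hab]
    rw [dotProduct_add]
    congr 1
    · congr 1
      rw [show (fun i => ∫ s in a..b, (Q s).mulVec (g s) i)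
          = fun i => ∫ s, (Q s).mulVec (g s) i ∂(LDm a b) from funext fun i => LD_ii2m hab _]
      rw [LD_dot_int' (LDm a b) x1 _ (fun i => LD_bm_mulVec_int hQ hg i)]
      exact MeasureTheory.integral_congr_ae
        (Filter.Eventually.of_forall fun s => LD_dot_mulVec_comm _ _ _)
    · rw [show (fun s => f s ⬝ᵥ ((Q s)ᵀ.mulVec x2 + (S s).mulVec (g s)
            + (fun i => ∫ η in a..s, (R1 s η).mulVec (g η) i)
            + (fun i => ∫ η in s..b, (R2 s η).mulVec (g η) i)))
          = fun s => f s ⬝ᵥ ((Q s)ᵀ).mulVec x2 + f s ⬝ᵥ (S s).mulVec (g s)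
            + f s ⬝ᵥ (fun i => ∫ η in a..s, (R1 s η).mulVec (g η) i)
            + f s ⬝ᵥ (fun i => ∫ η in s..b, (R2 s η).mulVec (g η) i) from
          funext fun s => by simp only [dotProduct_add]]
      have h12 : Integrable (fun s => f s ⬝ᵥ ((Q s)ᵀ).mulVec x2
          + f s ⬝ᵥ (S s).mulVec (g s)) (LDm a b) := hI1'.add hI2'
      have h123 : Integrable (fun s => f s ⬝ᵥ ((Q s)ᵀ).mulVec x2
          + f s ⬝ᵥ (S s).mulVec (g s)
          + f s ⬝ᵥ (fun i => ∫ η in a..s, (R1 s η).mulVec (g η) i)) (LDm a b) := h12.add hI3'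
      rw [MeasureTheory.integral_add h123 hI4', MeasureTheory.integral_add h12 hI3',
        MeasureTheory.integral_add hI1' hI2']
  -- atom equalities
  have eq1 : x2 ⬝ᵥ P.mulVec x1 = x1 ⬝ᵥ P.mulVec x2 := by
    rw [LD_dot_mulVec_comm, hP.eq]
  have eq4 : (∫ s, g s ⬝ᵥ (S s).mulVec (f s) ∂(LDm a b))
      = ∫ s, f s ⬝ᵥ (S s).mulVec (g s) ∂(LDm a b) := by
    refine MeasureTheory.integral_congr_ae ?_
    filter_upwards [ae_restrict_mem measurableSet_Ioc] with s hs
    rw [LD_dot_mulVec_comm, (hSsymm s (Ioc_subset_Icc_self hs)).eq]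
  have eq5 : (∫ s, g s ⬝ᵥ (fun i => ∫ η in a..s, (R1 s η).mulVec (f η) i) ∂(LDm a b))
      = ∫ s, f s ⬝ᵥ (fun i => ∫ η in s..b, (R2 s η).mulVec (g η) i) ∂(LDm a b) := by
    rw [(LD_core R1 hR1 g f hg hfi).2.2]
    exact MeasureTheory.integral_congr_ae (LD_flip_eq hR g f)
  have eq6 : (∫ s, g s ⬝ᵥ (fun i => ∫ η in s..b, (R2 s η).mulVec (f η) i) ∂(LDm a b))
      = ∫ s, f s ⬝ᵥ (fun i => ∫ η in a..s, (R1 s η).mulVec (g η) i) ∂(LDm a b) := by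
    rw [(LD_core R1 hR1 f g hfi hg).2.2]
    exact (MeasureTheory.integral_congr_ae (LD_flip_eq hR f g)).symm
  rw [expandL, expandR, eq1, eq4, eq5, eq6]
  ring

end LDsym
set_option maxHeartbeats 1000000 in
/-- **derivative of the Lyapunov function.**  With a self-adjoint
`𝒫 = 𝒫_{P,Q,Qᵀ,S,R₁,R₂}` and `𝒦 = 𝒫_{I,0,0,0,G₁,G₂}* ∘ 𝒫 ∘ 𝒫_dyn`, for every `x` and
every `z ∈ W^{2,2}` with `B_c z_b = 0` one has
`⟨(x,z), 𝒫 𝒫_dyn(x,z_ss)⟩_X + ⟨𝒫_dyn(x,z_ss), 𝒫 (x,z)⟩_X = 2 ⟨(x,z_ss), 𝒦(x,z_ss)⟩_X`. -/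
theorem lyapunov_derivative_representation {n0 np m0 p0 mp pp : ℕ}
    (a b : ℝ) (hab : a < b)
    (A : Matrix (Fin n0) (Fin n0) ℝ) (B : Matrix (Fin n0) (Fin m0) ℝ)
    (C : Matrix (Fin p0) (Fin n0) ℝ)
    (L1 : Matrix (Fin m0) (Fin p0) ℝ) (L2 : Matrix (Fin m0) (Fin pp) ℝ)
    (L3 : Matrix (Fin mp) (Fin p0) ℝ) (L4 : Matrix (Fin mp) (Fin pp) ℝ)
    (A0 A1 A2 : ℝ → Matrix (Fin np) (Fin np) ℝ)
    (B1 : ℝ → Matrix (Fin np) (Fin mp) ℝ)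
    (Ca Cb : ℝ → Matrix (Fin pp) (Fin np) ℝ)
    (C1 : Matrix (Fin pp) (Fin 4 × Fin np) ℝ)
    (hA0 : BddMeas a b A0) (hA1 : BddMeas a b A1) (hA2 : BddMeas a b A2)
    (hB1 : BddMeas a b B1) (hCa : BddMeas a b Ca) (hCb : BddMeas a b Cb)
    (Bc : Matrix (Fin 2 × Fin np) (Fin 4 × Fin np) ℝ)
    (hdet : IsUnit (Bc * Bdm a b np).det)
    (P : Matrix (Fin n0) (Fin n0) ℝ) (hP : P.IsSymm)
    (Q : ℝ → Matrix (Fin n0) (Fin np) ℝ)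
    (S : ℝ → Matrix (Fin np) (Fin np) ℝ)
    (R1 R2 : ℝ → ℝ → Matrix (Fin np) (Fin np) ℝ)
    (hQ : BddMeas a b Q) (hS : BddMeas a b S)
    (hR1 : BddMeas2 a b R1) (hR2 : BddMeas2 a b R2)
    (hSsymm : ∀ s ∈ Icc a b, (S s).IsSymm)
    (hR : ∀ s ∈ Icc a b, ∀ η ∈ Icc a b, R2 s η = (R1 η s)ᵀ)
    (x : Fin n0 → ℝ) (z zs zss : ℝ → Fin np → ℝ)
    (hz : ∀ s ∈ Icc a b, HasDerivWithinAt z (zs s) (Icc a b) s)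
    (hzs : ∀ s ∈ Icc a b, HasDerivWithinAt zs (zss s) (Icc a b) s)
    (hzss : MemLp zss 2 (volume.restrict (Icc a b)))
    (hbc : Bc.mulVec (zbv a b z zs) = 0) :
    innerX a b (x, z)
        (Pop a b P Q (fun s => (Q s)ᵀ) S R1 R2
          (PdynApply a b A B C L1 L2 L3 L4 A0 A1 A2 B1 Ca Cb C1 Bc (x, zss)))
      + innerX a b (PdynApply a b A B C L1 L2 L3 L4 A0 A1 A2 B1 Ca Cb C1 Bc (x, zss))
          (Pop a b P Q (fun s => (Q s)ᵀ) S R1 R2 (x, z))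
      = 2 * innerX a b (x, zss)
          (Kapply a b A B C L1 L2 L3 L4 A0 A1 A2 B1 Ca Cb C1 Bc P Q S R1 R2 (x, zss)) := by
  classical
  have hab' : a ≤ b := hab.le
  -- zss integrability
  have hzss2 : MemLp zss 2 (LDm a b) :=
    hzss.mono_measure (Measure.restrict_mono Ioc_subset_Icc_self le_rfl)
  have hzssInt : Integrable zss (LDm a b) := hzss2.integrable one_le_two
  have hzssi : ∀ i, Integrable (fun s => zss s i) (LDm a b) := fun i =>
    (ContinuousLinearMap.proj (R := ℝ) (φ := fun _ : Fin np => ℝ) i).integrable_comp hzssInt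
  have hzssIoc : ∀ i, IntegrableOn (fun s => zss s i) (Ioc a b) volume := hzssi
  -- continuity and boundedness of z, zs
  have hzBM : ∀ i, LDBM a b fun s => z s i := fun i =>
    LDBM.of_continuousOn (LD_comp_contOn hz i)
  have hzsBM : ∀ i, LDBM a b fun s => zs s i := fun i =>
    LDBM.of_continuousOn (LD_comp_contOn hzs i)
  have hzi : ∀ i, Integrable (fun s => z s i) (LDm a b) := fun i => (hzBM i).integrable
  have hzsi : ∀ i, Integrable (fun s => zs s i) (LDm a b) := fun i => (hzsBM i).integrable
  -- FTC
  have hftc : ∀ s ∈ Icc a b, ∀ i, (∫ η in a..s, zss η i) = zs s i - zs a i :=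
    fun s hs i => LD_ftc hzs hzssIoc hs i
  have htay : ∀ s ∈ Icc a b, ∀ i,
      (∫ η in a..s, (s - η) * zss η i) = z s i - z a i - (s - a) * zs a i :=
    fun s hs i => LD_taylor hz hzs hzssIoc hs i
  -- boundary identity
  set w0 : Fin 2 × Fin np → ℝ := fun q => ![z a, zs a] q.1 q.2 with hw0def
  set NN : Matrix (Fin 2 × Fin np) (Fin 4 × Fin np) ℝ := (Bc * Bdm a b np)⁻¹ * Bc with hNN
  set IE : Fin 4 × Fin np → ℝ := fun p => ∫ η in a..b, (colE b np η).mulVec (zss η) p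
    with hIEdef
  have hIEInt : ∀ p, Integrable (fun η => (colE b np η).mulVec (zss η) p) (LDm a b) :=
    fun p => LD_cont_mulVec_int (fun p j => LD_colE_cont p j) hzssi p
  have hBfInt : ∀ q, Integrable (fun η => (Bfm a b Bc η).mulVec (zss η) q) (LDm a b) :=
    fun q => LD_cont_mulVec_int (fun q j => LD_Bf_cont q j) hzssi q
  have hamem : a ∈ Icc a b := ⟨le_rfl, hab'⟩
  have hbmem : b ∈ Icc a b := ⟨hab', le_rfl⟩
  have hzb : zbv a b z zs = (Bdm a b np).mulVec w0 + IE := by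
    funext p
    obtain ⟨kk, i⟩ := p
    fin_cases kk
    · show z a i = ((Bdm a b np).mulVec w0 + IE) (0, i)
      rw [Pi.add_apply, (LD_Bdm_mulVec w0 i).1]
      have h0 : IE ((0 : Fin 4), i) = 0 := by
        rw [hIEdef]
        simp only [show ∀ η, (colE b np η).mulVec (zss η) ((0 : Fin 4), i) = 0 from
          fun η => (LD_colE_mulVec η (zss η) i).1]
        simp
      rw [h0]
      show z a i = z a i + 0
      ring
    · show z b i = ((Bdm a b np).mulVec w0 + IE) (1, i)
      rw [Pi.add_apply, (LD_Bdm_mulVec w0 i).2.1]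
      have h0 : IE ((1 : Fin 4), i) = z b i - z a i - (b - a) * zs a i := by
        rw [hIEdef]
        simp only [show ∀ η, (colE b np η).mulVec (zss η) ((1 : Fin 4), i)
            = (b - η) * zss η i from fun η => (LD_colE_mulVec η (zss η) i).2.1]
        exact htay b hbmem i
      rw [h0]
      show z b i = z a i + (b - a) * zs a i + (z b i - z a i - (b - a) * zs a i)
      ring
    · show zs a i = ((Bdm a b np).mulVec w0 + IE) (2, i)
      rw [Pi.add_apply, (LD_Bdm_mulVec w0 i).2.2.1]
      have h0 : IE ((2 : Fin 4), i) = 0 := by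
        rw [hIEdef]
        simp only [show ∀ η, (colE b np η).mulVec (zss η) ((2 : Fin 4), i) = 0 from
          fun η => (LD_colE_mulVec η (zss η) i).2.2.1]
        simp
      rw [h0]
      show zs a i = zs a i + 0
      ring
    · show zs b i = ((Bdm a b np).mulVec w0 + IE) (3, i)
      rw [Pi.add_apply, (LD_Bdm_mulVec w0 i).2.2.2]
      have h0 : IE ((3 : Fin 4), i) = zs b i - zs a i := by
        rw [hIEdef]
        simp only [show ∀ η, (colE b np η).mulVec (zss η) ((3 : Fin 4), i)
            = zss η i from fun η => (LD_colE_mulVec η (zss η) i).2.2.2]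
        exact hftc b hbmem i
      rw [h0]
      show zs b i = zs a i + (zs b i - zs a i)
      ring
  have hbc' : (Bc * Bdm a b np).mulVec w0 + Bc.mulVec IE = 0 := by
    have h := hbc
    rw [hzb, Matrix.mulVec_add, Matrix.mulVec_mulVec] at h
    exact h
  have hw0v : w0 = -(NN.mulVec IE) := by
    have h1 : (Bc * Bdm a b np).mulVec w0 = -(Bc.mulVec IE) :=
      eq_neg_of_add_eq_zero_left hbc'
    calc w0 = (1 : Matrix (Fin 2 × Fin np) (Fin 2 × Fin np) ℝ).mulVec w0 :=
          (Matrix.one_mulVec w0).symm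
      _ = ((Bc * Bdm a b np)⁻¹ * (Bc * Bdm a b np)).mulVec w0 := by
          rw [Matrix.nonsing_inv_mul _ hdet]
      _ = (Bc * Bdm a b np)⁻¹.mulVec ((Bc * Bdm a b np).mulVec w0) := by
          rw [Matrix.mulVec_mulVec]
      _ = (Bc * Bdm a b np)⁻¹.mulVec (-(Bc.mulVec IE)) := by rw [h1]
      _ = -(NN.mulVec IE) := by
          rw [Matrix.mulVec_neg, Matrix.mulVec_mulVec]
  have hIB : ∀ q, (∫ η in a..b, (Bfm a b Bc η).mulVec (zss η) q) = -(w0 q) := by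
    intro q
    have hBfeq : ∀ η, (Bfm a b Bc η).mulVec (zss η) q
        = (fun p => NN q p) ⬝ᵥ ((colE b np η).mulVec (zss η)) := by
      intro η
      rw [Bfm, hNN]
      rw [← Matrix.mulVec_mulVec]
      rfl
    simp only [hBfeq]
    rw [LD_ii2m hab', ← LD_dot_int' (LDm a b) _ _ hIEInt]
    have hIEm : (fun p => ∫ η, (colE b np η).mulVec (zss η) p ∂(LDm a b)) = IE :=
      funext fun p => (LD_ii2m hab' _).symm
    rw [hIEm]
    have h2 : (fun p => NN q p) ⬝ᵥ IE = NN.mulVec IE q := rfl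
    rw [h2, hw0v]
    simp
  -- full Bam integral
  have hBamFull : ∀ s ∈ Icc a b, ∀ i,
      (∫ η in a..b, (Bam a b Bc s η).mulVec (zss η) i) = z a i + (s - a) * zs a i := by
    intro s hs i
    have hBamv : ∀ η, (Bam a b Bc s η).mulVec (zss η) i
        = -((fun q => rowIA a np s i q) ⬝ᵥ (Bfm a b Bc η).mulVec (zss η)) := by
      intro η
      rw [Bam, Matrix.neg_mulVec, ← Matrix.mulVec_mulVec, Pi.neg_apply]
      rfl
    simp only [hBamv]
    rw [intervalIntegral.integral_neg, LD_ii2m hab', ← LD_dot_int' (LDm a b) _ _ hBfInt]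
    have h3 : (fun q => ∫ η, (Bfm a b Bc η).mulVec (zss η) q ∂(LDm a b))
        = fun q => -(w0 q) := funext fun q => by rw [← LD_ii2m hab']; exact hIB q
    rw [h3]
    have h4 : ((fun q => rowIA a np s i q) ⬝ᵥ fun q => -(w0 q))
        = -((rowIA a np s).mulVec w0 i) := by
      simp [dotProduct, Matrix.mulVec, mul_neg]
    rw [h4, neg_neg, LD_rowIA_mulVec]
    simp [hw0def]
  have hBbFull : ∀ i,
      (∫ η in a..b, (Bbm a b Bc η).mulVec (zss η) i) = zs a i := by
    intro i
    have hBbv : ∀ η, (Bbm a b Bc η).mulVec (zss η) i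
        = -((fun q => rowZI np i q) ⬝ᵥ (Bfm a b Bc η).mulVec (zss η)) := by
      intro η
      rw [Bbm, Matrix.neg_mulVec, ← Matrix.mulVec_mulVec, Pi.neg_apply]
      rfl
    simp only [hBbv]
    rw [intervalIntegral.integral_neg, LD_ii2m hab', ← LD_dot_int' (LDm a b) _ _ hBfInt]
    have h3 : (fun q => ∫ η, (Bfm a b Bc η).mulVec (zss η) q ∂(LDm a b))
        = fun q => -(w0 q) := funext fun q => by rw [← LD_ii2m hab']; exact hIB q
    rw [h3]
    have h4 : ((fun q => rowZI np i q) ⬝ᵥ fun q => -(w0 q))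
        = -((rowZI np).mulVec w0 i) := by
      simp [dotProduct, Matrix.mulVec, mul_neg]
    rw [h4, neg_neg, LD_rowZI_mulVec]
    simp [hw0def]
  -- representation claims
  have hg1 : ∀ s ∈ Icc a b, ∀ i,
      ((∫ η in a..s, (G1m a b Bc s η).mulVec (zss η) i)
        + ∫ η in s..b, (G2m a b Bc s η).mulVec (zss η) i) = z s i := by
    intro s hs i
    have hBamc : ∀ i j, Continuous fun η => Bam a b Bc s η i j := fun i j =>
      LD_Bam_cont_right s i j
    have hiiBamL : IntervalIntegrable (fun η => (Bam a b Bc s η).mulVec (zss η) i)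
        volume a s := LD_ii_mulVec hBamc hzssIoc le_rfl hs.1 hs.2 i
    have hiiBamR : IntervalIntegrable (fun η => (Bam a b Bc s η).mulVec (zss η) i)
        volume s b := LD_ii_mulVec hBamc hzssIoc hs.1 hs.2 le_rfl i
    have hiiTay : IntervalIntegrable (fun η => (s - η) * zss η i) volume a s :=
      LD_ii_smul (continuous_const.sub continuous_id) (hzssIoc i) le_rfl hs.1 hs.2
    have hsplit : ∀ η, (G1m a b Bc s η).mulVec (zss η) i
        = (Bam a b Bc s η).mulVec (zss η) i + (s - η) * zss η i := by
      intro η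
      rw [G1m, Matrix.add_mulVec, Matrix.smul_mulVec, Matrix.one_mulVec,
        Pi.add_apply, Pi.smul_apply, smul_eq_mul]
    have hG2 : ∀ η, (G2m a b Bc s η).mulVec (zss η) i
        = (Bam a b Bc s η).mulVec (zss η) i := fun η => rfl
    simp only [hsplit, hG2]
    rw [intervalIntegral.integral_add hiiBamL hiiTay, htay s hs i]
    have hadj := intervalIntegral.integral_add_adjacent_intervals hiiBamL hiiBamR
    have hfull := hBamFull s hs i
    linarith [hadj, hfull]
  have hg3 : ∀ s ∈ Icc a b, ∀ i,
      ((∫ η in a..s, (G3m a b Bc s η).mulVec (zss η) i)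
        + ∫ η in s..b, (G4m a b Bc s η).mulVec (zss η) i) = zs s i := by
    intro s hs i
    have hBbc : ∀ i j, Continuous fun η => Bbm a b Bc η i j := fun i j => LD_Bb_cont i j
    have hiiBbL : IntervalIntegrable (fun η => (Bbm a b Bc η).mulVec (zss η) i)
        volume a s := LD_ii_mulVec hBbc hzssIoc le_rfl hs.1 hs.2 i
    have hiiBbR : IntervalIntegrable (fun η => (Bbm a b Bc η).mulVec (zss η) i)
        volume s b := LD_ii_mulVec hBbc hzssIoc hs.1 hs.2 le_rfl i
    have hiiZ : IntervalIntegrable (fun η => zss η i) volume a s := by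
      rw [intervalIntegrable_iff_integrableOn_Ioc_of_le hs.1]
      exact (hzssIoc i).mono_set (Ioc_subset_Ioc le_rfl hs.2)
    have hsplit : ∀ η, (G3m a b Bc s η).mulVec (zss η) i
        = (Bbm a b Bc η).mulVec (zss η) i + zss η i := by
      intro η
      rw [G3m, Matrix.add_mulVec, Matrix.one_mulVec, Pi.add_apply]
    have hG4 : ∀ η, (G4m a b Bc s η).mulVec (zss η) i
        = (Bbm a b Bc η).mulVec (zss η) i := fun η => rfl
    simp only [hsplit, hG4]
    rw [intervalIntegral.integral_add hiiBbL hiiZ, hftc s hs i]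
    have hadj := intervalIntegral.integral_add_adjacent_intervals hiiBbL hiiBbR
    have hfull := hBbFull i
    linarith [hadj, hfull]
  -- function-level representation claims
  have hg1' : ∀ s ∈ Icc a b,
      ((fun i => ∫ η in a..s, (G1m a b Bc s η).mulVec (zss η) i)
        + fun i => ∫ η in s..b, (G2m a b Bc s η).mulVec (zss η) i) = z s := by
    intro s hs
    funext i
    rw [Pi.add_apply]
    exact hg1 s hs i
  have hg3' : ∀ s ∈ Icc a b,
      ((fun i => ∫ η in a..s, (G3m a b Bc s η).mulVec (zss η) i)
        + fun i => ∫ η in s..b, (G4m a b Bc s η).mulVec (zss η) i) = zs s := by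
    intro s hs
    funext i
    rw [Pi.add_apply]
    exact hg3 s hs i
  -- the dynamic operator applied to (x, zss)
  set PD := PdynApply a b A B C L1 L2 L3 L4 A0 A1 A2 B1 Ca Cb C1 Bc (x, zss) with hPDdef
  set vt : ℝ → Fin np → ℝ := fun s =>
    (B1 s * L3 * C).mulVec x + (A0 s + B1 s * L4 * Ca s).mulVec (z s)
      + (A1 s + B1 s * L4 * Cb s).mulVec (zs s)
      + (A2 s + B1 s * L4 * C3m a b Bc C1 s).mulVec (zss s) with hvtdef
  have hPD2 : ∀ s ∈ Icc a b, PD.2 s = vt s := by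
    intro s hs
    rw [hPDdef, hvtdef]
    simp only [PdynApply, Pop, Prod.snd_add, Pi.add_apply, Matrix.zero_mulVec, Pi.zero_apply,
      intervalIntegral.integral_zero, LD_fun_zero, add_zero, zero_add, Matrix.one_mulVec]
    rw [hg1' s hs, hg3' s hs]
  -- LDBM entries of the coefficient matrices
  have hB1bm : ∀ i j, LDBM a b fun s => B1 s i j := fun i j => LDBM.of_bddMeas hB1 i j
  have hΓbm : ∀ i j, LDBM a b fun s => (B1 s * L3 * C) i j := fun i j =>
    LDBM.matmul (fun i j => LDBM.matmul hB1bm (fun i j => LDBM.const (L3 i j)) i j)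
      (fun i j => LDBM.const (C i j)) i j
  have hE0bm : ∀ i j, LDBM a b fun s => (A0 s + B1 s * L4 * Ca s) i j := by
    intro i j
    have h2 : LDBM a b fun s => (B1 s * L4 * Ca s) i j :=
      LDBM.matmul (fun i j => LDBM.matmul hB1bm (fun i j => LDBM.const (L4 i j)) i j)
        (fun i j => LDBM.of_bddMeas hCa i j) i j
    have h : (fun s => (A0 s + B1 s * L4 * Ca s) i j)
        = fun s => A0 s i j + (B1 s * L4 * Ca s) i j :=
      funext fun s => by rw [Matrix.add_apply]
    rw [h]
    exact (LDBM.of_bddMeas hA0 i j).add h2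
  have hE1bm : ∀ i j, LDBM a b fun s => (A1 s + B1 s * L4 * Cb s) i j := by
    intro i j
    have h2 : LDBM a b fun s => (B1 s * L4 * Cb s) i j :=
      LDBM.matmul (fun i j => LDBM.matmul hB1bm (fun i j => LDBM.const (L4 i j)) i j)
        (fun i j => LDBM.of_bddMeas hCb i j) i j
    have h : (fun s => (A1 s + B1 s * L4 * Cb s) i j)
        = fun s => A1 s i j + (B1 s * L4 * Cb s) i j :=
      funext fun s => by rw [Matrix.add_apply]
    rw [h]
    exact (LDBM.of_bddMeas hA1 i j).add h2
  have hE2bm : ∀ i j, LDBM a b fun s => (A2 s + B1 s * L4 * C3m a b Bc C1 s) i j := by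
    intro i j
    have h2 : LDBM a b fun s => (B1 s * L4 * C3m a b Bc C1 s) i j :=
      LDBM.matmul (fun i j => LDBM.matmul hB1bm (fun i j => LDBM.const (L4 i j)) i j)
        (fun i j => LDBM.of_continuous (LD_C3_cont C1 i j)) i j
    have h : (fun s => (A2 s + B1 s * L4 * C3m a b Bc C1 s) i j)
        = fun s => A2 s i j + (B1 s * L4 * C3m a b Bc C1 s) i j :=
      funext fun s => by rw [Matrix.add_apply]
    rw [h]
    exact (LDBM.of_bddMeas hA2 i j).add h2
  have hxc : ∀ j : Fin n0, Integrable (fun _ : ℝ => x j) (LDm a b) := fun j =>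
    MeasureTheory.integrable_const (x j)
  have hvti : ∀ i, Integrable (fun s => vt s i) (LDm a b) := by
    intro i
    have hbig := (((LD_bm_mulVec_int hΓbm hxc i).add
      (LD_bm_mulVec_int hE0bm hzi i)).add
      (LD_bm_mulVec_int hE1bm hzsi i)).add
      (LD_bm_mulVec_int hE2bm hzssi i)
    refine hbig.congr (Filter.Eventually.of_forall fun s => ?_)
    rw [hvtdef]
    simp [Pi.add_apply]
  have hPD2i : ∀ i, Integrable (fun s => PD.2 s i) (LDm a b) := by
    intro i
    refine (hvti i).congr ?_
    filter_upwards [ae_restrict_mem measurableSet_Ioc] with s hs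
    rw [hPD2 s (Ioc_subset_Icc_self hs)]
  -- entry conditions for P, Q, S, R kernels
  have hQbm : ∀ i j, LDBM a b fun s => Q s i j := fun i j => LDBM.of_bddMeas hQ i j
  have hSbm : ∀ i j, LDBM a b fun s => S s i j := fun i j => LDBM.of_bddMeas hS i j
  have hR1k : ∀ i j, LDBM2 a b fun p => R1 p.1 p.2 i j := fun i j =>
    LDBM2.of_bddMeas2 hR1 i j
  have hR2k : ∀ i j, LDBM2 a b fun p => R2 p.1 p.2 i j := fun i j =>
    LDBM2.of_bddMeas2 hR2 i j
  -- the symmetry step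
  have hSymEq : innerX a b PD (Pop a b P Q (fun s => (Q s)ᵀ) S R1 R2 (x, z))
      = innerX a b (x, z) (Pop a b P Q (fun s => (Q s)ᵀ) S R1 R2 PD) :=
    LD_sym hab' P hP Q S R1 R2 hQbm hSbm hR1k hSsymm hR x PD.1 z PD.2 hzBM hPD2i
  -- the adjoint step
  have hAdj : innerX a b (x, zss)
        (PGadjApply a b Bc (Pop a b P Q (fun s => (Q s)ᵀ) S R1 R2 PD))
      = innerX a b (x, z) (Pop a b P Q (fun s => (Q s)ᵀ) S R1 R2 PD) := by
    set w1 := (Pop a b P Q (fun s => (Q s)ᵀ) S R1 R2 PD).1 with hw1def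
    set w2 := (Pop a b P Q (fun s => (Q s)ᵀ) S R1 R2 PD).2 with hw2def
    have hw2i : ∀ i, Integrable (fun s => w2 s i) (LDm a b) := by
      intro i
      have h : (fun s => w2 s i) = fun s => ((Q s)ᵀ).mulVec PD.1 i
          + (S s).mulVec (PD.2 s) i
          + (∫ η in a..s, (R1 s η).mulVec (PD.2 η) i)
          + (∫ η in s..b, (R2 s η).mulVec (PD.2 η) i) := by
        funext s
        rw [hw2def]
        simp only [Pop, Pi.add_apply]
      rw [h]
      have hQt : ∀ i j, LDBM a b fun s => (Q s)ᵀ i j := fun i j => hQbm j i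
      have hPD1c : ∀ j : Fin n0, Integrable (fun _ : ℝ => PD.1 j) (LDm a b) := fun j =>
        MeasureTheory.integrable_const _
      exact (((LD_bm_mulVec_int hQt hPD1c i).add
        (LD_bm_mulVec_int hSbm hPD2i i)).add
        (LD_marg_left R1 hR1k PD.2 hPD2i i)).add
        (LD_marg_right R2 hR2k PD.2 hPD2i i)
    -- kernel conditions for the G matrices
    have hK1 : ∀ i j, LDBM2 a b fun p : ℝ × ℝ => (G2m a b Bc p.2 p.1)ᵀ i j := fun i j =>
      LDBM2.of_continuous (LD_cont_swap (LD_G2_cont j i))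
    have hKG1 : ∀ i j, LDBM2 a b fun p : ℝ × ℝ => G1m a b Bc p.1 p.2 i j := fun i j =>
      LDBM2.of_continuous (LD_G1_cont i j)
    have hcore1 := LD_core (fun s η => (G2m a b Bc η s)ᵀ) hK1 zss w2 hzssi hw2i
    have hcore2 := LD_core (G1m a b Bc) hKG1 w2 zss hw2i hzssi
    have hpair : Pop a b P Q (fun s => (Q s)ᵀ) S R1 R2 PD = (w1, w2) := rfl
    rw [hpair]
    simp only [innerX, PGadjApply, Pop, Matrix.zero_mulVec, Pi.zero_apply,
      intervalIntegral.integral_zero, LD_fun_zero, add_zero, zero_add, Matrix.one_mulVec]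
    -- LHS: x ⬝ᵥ w1 + ∫ s in a..b, zss s ⬝ᵥ (ρ1 + ρ2)
    congr 1
    rw [LD_ii2m hab', LD_ii2m hab']
    have hsplit : (fun s => zss s ⬝ᵥ
        ((fun i => ∫ η in a..s, ((G2m a b Bc η s)ᵀ).mulVec (w2 η) i)
          + fun i => ∫ η in s..b, ((G1m a b Bc η s)ᵀ).mulVec (w2 η) i))
        = fun s => zss s ⬝ᵥ (fun i => ∫ η in a..s, ((G2m a b Bc η s)ᵀ).mulVec (w2 η) i)
          + zss s ⬝ᵥ (fun i => ∫ η in s..b, ((G1m a b Bc η s)ᵀ).mulVec (w2 η) i) :=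
      funext fun s => by rw [dotProduct_add]
    rw [hsplit]
    have hJ1 : Integrable (fun s => zss s ⬝ᵥ
        (fun i => ∫ η in a..s, ((G2m a b Bc η s)ᵀ).mulVec (w2 η) i)) (LDm a b) := hcore1.1
    have hJ2 : Integrable (fun s => zss s ⬝ᵥ
        (fun i => ∫ η in s..b, ((G1m a b Bc η s)ᵀ).mulVec (w2 η) i)) (LDm a b) := by
      refine hcore2.2.1.congr (Filter.Eventually.of_forall fun s => ?_)
      exact dotProduct_comm _ _
    rw [MeasureTheory.integral_add hJ1 hJ2]
    -- first piece
    have hA1 : (∫ s, zss s ⬝ᵥ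
          (fun i => ∫ η in a..s, ((G2m a b Bc η s)ᵀ).mulVec (w2 η) i) ∂(LDm a b))
        = ∫ s, (fun j => ∫ η in s..b, (G2m a b Bc s η).mulVec (zss η) j) ⬝ᵥ w2 s
            ∂(LDm a b) := by
      rw [hcore1.2.2]
      simp only [Matrix.transpose_transpose]
    have hA2 : (∫ s, zss s ⬝ᵥ
          (fun i => ∫ η in s..b, ((G1m a b Bc η s)ᵀ).mulVec (w2 η) i) ∂(LDm a b))
        = ∫ s, w2 s ⬝ᵥ (fun i => ∫ η in a..s, (G1m a b Bc s η).mulVec (zss η) i)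
            ∂(LDm a b) := by
      have hstep : (∫ s, zss s ⬝ᵥ
            (fun i => ∫ η in s..b, ((G1m a b Bc η s)ᵀ).mulVec (w2 η) i) ∂(LDm a b))
          = ∫ η, (fun j => ∫ s in η..b, ((G1m a b Bc s η)ᵀ).mulVec (w2 s) j) ⬝ᵥ zss η
              ∂(LDm a b) :=
        MeasureTheory.integral_congr_ae (Filter.Eventually.of_forall fun s =>
          dotProduct_comm _ _)
      rw [hstep, ← hcore2.2.2]
    rw [hA1, hA2]
    have hB1' : Integrable (fun s =>
        (fun j => ∫ η in s..b, (G2m a b Bc s η).mulVec (zss η) j) ⬝ᵥ w2 s) (LDm a b) := by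
      refine hcore1.2.1.congr (Filter.Eventually.of_forall fun s => ?_)
      simp only [Matrix.transpose_transpose]
    have hB2' : Integrable (fun s =>
        w2 s ⬝ᵥ (fun i => ∫ η in a..s, (G1m a b Bc s η).mulVec (zss η) i)) (LDm a b) :=
      hcore2.1
    rw [← MeasureTheory.integral_add hB1' hB2']
    refine MeasureTheory.integral_congr_ae ?_
    filter_upwards [ae_restrict_mem measurableSet_Ioc] with s hs
    have hzrep := hg1' s (Ioc_subset_Icc_self hs)
    calc (fun j => ∫ η in s..b, (G2m a b Bc s η).mulVec (zss η) j) ⬝ᵥ w2 s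
          + w2 s ⬝ᵥ (fun i => ∫ η in a..s, (G1m a b Bc s η).mulVec (zss η) i)
        = w2 s ⬝ᵥ ((fun i => ∫ η in a..s, (G1m a b Bc s η).mulVec (zss η) i)
            + fun i => ∫ η in s..b, (G2m a b Bc s η).mulVec (zss η) i) := by
          rw [dotProduct_add, dotProduct_comm]
          ring
      _ = w2 s ⬝ᵥ z s := by rw [hzrep]
      _ = z s ⬝ᵥ w2 s := dotProduct_comm _ _
  -- final assembly
  have hK : Kapply a b A B C L1 L2 L3 L4 A0 A1 A2 B1 Ca Cb C1 Bc P Q S R1 R2 (x, zss)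
      = PGadjApply a b Bc (Pop a b P Q (fun s => (Q s)ᵀ) S R1 R2 PD) := rfl
  rw [hK, hSymEq, hAdj]
  ring

end
end

section
/- Consider the coupled ODE-heat system on the interval [0,1]: ẋ(t) = −3x(t) + z(0,t), ż(s,t) = z_ss(s,t), with boundary conditions z_s(0,t) = 0 and z(1,t) = 0. Then this system is exponentially stable: there exist M ≥ 1 and δ > 0 such that every classical solution (x(t), z(·,t)) — with x : [0,∞) → ℝ continuously differentiable, z(·,t) ∈ W^{2,2}([0,1];ℝ) satisfying the boundary conditions for all t ≥ 0, and t ↦ (x(t), z(·,t)) differentiable into ℝ × L²(0,1) with the stated dynamics — satisfies (|x(t)|² + ‖z(·,t)‖_{L²(0,1)}²)^{1/2} ≤ M e^{−δt} (|x(0)|² + ‖z(·,0)‖_{L²(0,1)}²)^{1/2} for all t ≥ 0. -/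
open MeasureTheory Set


lemma l2_inner_toLp {μ : Measure ℝ} {f g : ℝ → ℝ} (hf : MemLp f 2 μ) (hg : MemLp g 2 μ) :
    (inner ℝ (hf.toLp f) (hg.toLp g) : ℝ) = ∫ s, f s * g s ∂μ := by
  rw [MeasureTheory.L2.inner_def]
  refine integral_congr_ae ?_
  filter_upwards [hf.coeFn_toLp, hg.coeFn_toLp] with s h1 h2
  rw [h1, h2, RCLike.inner_apply]
  simp [mul_comm]

lemma l2_norm_toLp_sq {μ : Measure ℝ} {f : ℝ → ℝ} (hf : MemLp f 2 μ) :
    ‖hf.toLp f‖ ^ 2 = ∫ s, f s ^ 2 ∂μ := by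
  rw [← real_inner_self_eq_norm_sq, l2_inner_toLp hf hf]
  simp only [pow_two]

lemma cs_integral {μ : Measure ℝ} [IsFiniteMeasure μ] {f : ℝ → ℝ} (hf : MemLp f 2 μ) :
    (∫ s, f s ∂μ) ^ 2 ≤ (μ univ).toReal * ∫ s, f s ^ 2 ∂μ := by
  have hg : MemLp (fun _ : ℝ => (1 : ℝ)) 2 μ := memLp_const 1
  have h1 : (inner ℝ (hf.toLp f) (hg.toLp _) : ℝ) = ∫ s, f s ∂μ := by
    rw [l2_inner_toLp]; simp
  have h2 : |(inner ℝ (hf.toLp f) (hg.toLp _) : ℝ)| ≤ ‖hf.toLp f‖ * ‖hg.toLp _‖ :=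
    abs_real_inner_le_norm _ _
  have h3 : (∫ s, f s ∂μ) ^ 2 ≤ (‖hf.toLp f‖ * ‖hg.toLp _‖) ^ 2 := by
    rw [← h1, ← sq_abs]
    exact pow_le_pow_left₀ (abs_nonneg _) h2 2
  calc (∫ s, f s ∂μ) ^ 2 ≤ ‖hf.toLp f‖ ^ 2 * ‖hg.toLp _‖ ^ 2 := by rw [← mul_pow]; exact h3
    _ = (μ univ).toReal * ∫ s, f s ^ 2 ∂μ := by
        rw [l2_norm_toLp_sq, l2_norm_toLp_sq]
        simp [mul_comm, Measure.real]

lemma memLp_of_continuousOn {a b : ℝ} {f : ℝ → ℝ} (hf : ContinuousOn f (Icc a b)) :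
    MemLp f 2 (volume.restrict (Icc a b)) := by
  obtain ⟨C, hC⟩ := (isCompact_Icc).exists_bound_of_continuousOn hf
  exact MemLp.of_bound (hf.aestronglyMeasurable measurableSet_Icc) C
    ((ae_restrict_iff' measurableSet_Icc).2 (Filter.Eventually.of_forall hC))

lemma interval_to_restrict {a b : ℝ} (hab : a ≤ b) (f : ℝ → ℝ) :
    (∫ s in a..b, f s) = ∫ s, f s ∂(volume.restrict (Icc a b)) := by
  rw [intervalIntegral.integral_of_le hab, ← integral_Icc_eq_integral_Ioc]

lemma interval_cs {a b : ℝ} (hab : a ≤ b) {f : ℝ → ℝ} (hf : ContinuousOn f (Icc a b)) :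
    (∫ s in a..b, f s) ^ 2 ≤ (b - a) * ∫ s in a..b, f s ^ 2 := by
  have hfin : IsFiniteMeasure (volume.restrict (Icc a b)) := by
    constructor
    rw [Measure.restrict_apply_univ, Real.volume_Icc]
    exact ENNReal.ofReal_lt_top
  rw [interval_to_restrict hab, interval_to_restrict hab]
  have h := cs_integral (μ := volume.restrict (Icc a b)) (memLp_of_continuousOn hf)
  rwa [Measure.restrict_apply_univ, Real.volume_Icc, ENNReal.toReal_ofReal (by linarith)] at h

lemma gronwall_exp {V DV : ℝ → ℝ}
    (hd : ∀ t ∈ Ici (0:ℝ), HasDerivWithinAt V (DV t) (Ici 0) t)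
    (hle : ∀ t ∈ Ici (0:ℝ), DV t ≤ -V t) {t : ℝ} (ht : 0 ≤ t) :
    V t ≤ V 0 * Real.exp (-t) := by
  set g : ℝ → ℝ := fun τ => V τ * Real.exp τ with hgdef
  have hg : ∀ τ ∈ Ici (0:ℝ),
      HasDerivWithinAt g (DV τ * Real.exp τ + V τ * Real.exp τ) (Ici (0:ℝ)) τ :=
    fun τ hτ => (hd τ hτ).mul (Real.hasDerivAt_exp τ).hasDerivWithinAt
  have anti : AntitoneOn g (Ici 0) := by
    apply antitoneOn_of_deriv_nonpos (convex_Ici 0)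
    · exact fun τ hτ => (hg τ hτ).continuousWithinAt
    · intro τ hτ
      rw [interior_Ici] at hτ
      exact (((hg τ (mem_Ici.mpr (le_of_lt (mem_Ioi.mp hτ)))).hasDerivAt
        (Ici_mem_nhds hτ)).differentiableAt).differentiableWithinAt
    · intro τ hτ
      rw [interior_Ici] at hτ
      have h := (hg τ (mem_Ici.mpr (le_of_lt (mem_Ioi.mp hτ)))).hasDerivAt (Ici_mem_nhds hτ)
      rw [h.deriv]
      have h2 := hle τ (mem_Ici.mpr (le_of_lt (mem_Ioi.mp hτ)))
      nlinarith [Real.exp_pos τ]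
  have h1 : g t ≤ g 0 := anti self_mem_Ici ht ht
  have h0 : g 0 = V 0 := by simp [hgdef]
  have h2 : V t * Real.exp t ≤ V 0 := by rwa [h0] at h1
  have h3 := mul_le_mul_of_nonneg_right h2 (Real.exp_nonneg (-t))
  calc V t = V t * Real.exp t * Real.exp (-t) := by
        rw [mul_assoc, ← Real.exp_add, add_neg_cancel, Real.exp_zero, mul_one]
    _ ≤ V 0 * Real.exp (-t) := h3

lemma ftc_tail {z zs : ℝ → ℝ}
    (hzd : ∀ s ∈ Icc (0:ℝ) 1, HasDerivWithinAt z (zs s) (Icc (0:ℝ) 1) s)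
    (hzs : ContinuousOn zs (Icc 0 1)) {s : ℝ} (hs : s ∈ Icc (0:ℝ) 1) :
    ∫ u in s..1, zs u = z 1 - z s := by
  have hsub : Icc s 1 ⊆ Icc (0:ℝ) 1 := Icc_subset_Icc hs.1 le_rfl
  have hcz : ContinuousOn z (Icc (0:ℝ) 1) :=
    fun u hu => (hzd u hu).continuousWithinAt
  apply intervalIntegral.integral_eq_sub_of_hasDeriv_right_of_le hs.2 (hcz.mono hsub)
  · intro u hu
    have hu' : u ∈ Ioo (0:ℝ) 1 := ⟨lt_of_le_of_lt hs.1 hu.1, hu.2⟩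
    exact (((hzd u (Ioo_subset_Icc_self hu')).hasDerivAt
      (Icc_mem_nhds hu'.1 hu'.2)).hasDerivWithinAt)
  · exact (hzs.mono (by rw [uIcc_of_le hs.2]; exact hsub)).intervalIntegrable

/-- **ODE coupled with the heat equation.**  The coupled system on `[0,1]`
`ẋ(t) = −3x(t) + z(0,t)`, `ż = z_ss`, `z_s(0,t) = 0`, `z(1,t) = 0` is exponentially
stable: there exist `M ≥ 1` and `δ > 0` such that every classical solution satisfies
`(|x(t)|² + ‖z(·,t)‖²_{L²})^{1/2} ≤ M e^{−δt} (|x(0)|² + ‖z(·,0)‖²_{L²})^{1/2}`. -/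
theorem heat_ode_coupled_exponentially_stable :
    ∃ M δ : ℝ, 1 ≤ M ∧ 0 < δ ∧
      ∀ (x : ℝ → ℝ) (z zs zss : ℝ → ℝ → ℝ)
        -- the trajectory lies in `L²(0,1)`
        (hmem : ∀ t : ℝ, MemLp (z t) 2 (volume.restrict (Icc (0:ℝ) 1)))
        -- spatial regularity: `z(·,t) ∈ W^{2,2}([0,1];ℝ)`
        (_hzd : ∀ t : ℝ, 0 ≤ t →
          ∀ s ∈ Icc (0:ℝ) 1, HasDerivWithinAt (z t) (zs t s) (Icc (0:ℝ) 1) s)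
        (_hzsd : ∀ t : ℝ, 0 ≤ t →
          ∀ s ∈ Icc (0:ℝ) 1, HasDerivWithinAt (zs t) (zss t s) (Icc (0:ℝ) 1) s)
        (hss : ∀ (t : ℝ), 0 ≤ t → MemLp (zss t) 2 (volume.restrict (Icc (0:ℝ) 1)))
        -- boundary conditions `z_s(0,t) = 0`, `z(1,t) = 0`
        (_hb1 : ∀ t : ℝ, 0 ≤ t → zs t 0 = 0)
        (_hb2 : ∀ t : ℝ, 0 ≤ t → z t 1 = 0)
        -- ODE dynamics: `x` is continuously differentiable with `ẋ(t) = −3x(t) + z(0,t)`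
        (_hx : ∀ t : ℝ, 0 ≤ t →
          HasDerivWithinAt x (-3 * x t + z t 0) (Ici (0:ℝ)) t)
        (_hxC1 : ContinuousOn (fun t => -3 * x t + z t 0) (Ici (0:ℝ)))
        -- PDE dynamics: `t ↦ z(·,t)` is differentiable into `L²(0,1)` with `ż = z_ss`
        (_hzdyn : ∀ (t : ℝ) (ht : 0 ≤ t), HasDerivWithinAt
          (fun τ => MemLp.toLp (z τ) (hmem τ))
          (MemLp.toLp (zss t) (hss t ht)) (Ici (0:ℝ)) t),
        ∀ t : ℝ, 0 ≤ t →
          Real.sqrt ((x t) ^ 2 + ∫ s in (0:ℝ)..1, (z t s) ^ 2)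
            ≤ M * Real.exp (-δ * t)
              * Real.sqrt ((x 0) ^ 2 + ∫ s in (0:ℝ)..1, (z 0 s) ^ 2) := by
  refine ⟨1, 1/2, le_rfl, by norm_num, ?_⟩
  intro x z zs zss hmem hzd hzsd hss hb1 hb2 hx hxC1 hzdyn t ht
  -- abbreviations
  have hfin : IsFiniteMeasure (volume.restrict (Icc (0:ℝ) 1)) := by
    constructor
    rw [Measure.restrict_apply_univ, Real.volume_Icc]
    exact ENNReal.ofReal_lt_top
  set F : ℝ → Lp ℝ 2 (volume.restrict (Icc (0:ℝ) 1)) :=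
    fun τ => MemLp.toLp (z τ) (hmem τ) with hF
  set V : ℝ → ℝ := fun τ => (x τ) ^ 2 + (inner ℝ (F τ) (F τ) : ℝ) with hVdef
  set DV : ℝ → ℝ :=
    fun τ => 2 * x τ * (-3 * x τ + z τ 0) - 2 * ∫ u in (0:ℝ)..1, (zs τ u) ^ 2 with hDVdef
  -- V in integral form
  have hVform : ∀ τ : ℝ, V τ = (x τ) ^ 2 + ∫ s in (0:ℝ)..1, (z τ s) ^ 2 := by
    intro τ
    have h1 : (inner ℝ (F τ) (F τ) : ℝ) = ∫ s, z τ s * z τ s ∂(volume.restrict (Icc (0:ℝ) 1)) :=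
      l2_inner_toLp (hmem τ) (hmem τ)
    rw [hVdef]
    simp only []
    rw [h1, interval_to_restrict zero_le_one]
    simp_rw [pow_two]
  -- continuity facts
  have cz : ∀ τ : ℝ, 0 ≤ τ → ContinuousOn (z τ) (Icc (0:ℝ) 1) :=
    fun τ hτ s hs => (hzd τ hτ s hs).continuousWithinAt
  have czs : ∀ τ : ℝ, 0 ≤ τ → ContinuousOn (zs τ) (Icc (0:ℝ) 1) :=
    fun τ hτ s hs => (hzsd τ hτ s hs).continuousWithinAt
  -- value of z via FTC
  have hzval : ∀ τ : ℝ, 0 ≤ τ → ∀ s ∈ Icc (0:ℝ) 1, z τ s = -(∫ u in s..1, zs τ u) := by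
    intro τ hτ s hs
    rw [ftc_tail (hzd τ hτ) (czs τ hτ) hs, hb2 τ hτ]
    ring
  -- Poincaré-type bounds
  have hz0 : ∀ τ : ℝ, 0 ≤ τ → (z τ 0) ^ 2 ≤ ∫ u in (0:ℝ)..1, (zs τ u) ^ 2 := by
    intro τ hτ
    rw [hzval τ hτ 0 (left_mem_Icc.2 zero_le_one), neg_pow]
    have h := interval_cs zero_le_one (czs τ hτ)
    simpa using h
  have hAB : ∀ τ : ℝ, 0 ≤ τ →
      (∫ s in (0:ℝ)..1, (z τ s) ^ 2) ≤ ∫ u in (0:ℝ)..1, (zs τ u) ^ 2 := by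
    intro τ hτ
    set B := ∫ u in (0:ℝ)..1, (zs τ u) ^ 2 with hBdef
    have hzs2int : ∀ a b : ℝ, a ∈ Icc (0:ℝ) 1 → b ∈ Icc (0:ℝ) 1 →
        IntervalIntegrable (fun u => (zs τ u) ^ 2) volume a b := by
      intro a b ha hb
      apply ContinuousOn.intervalIntegrable
      apply ((czs τ hτ).mono ?_).pow
      exact uIcc_subset_Icc ha hb
    have hpt : ∀ s ∈ Icc (0:ℝ) 1, (z τ s) ^ 2 ≤ B := by
      intro s hs
      rw [hzval τ hτ s hs, neg_pow]
      have h1 : (∫ u in s..1, zs τ u) ^ 2 ≤ (1 - s) * ∫ u in s..1, (zs τ u) ^ 2 :=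
        interval_cs hs.2 ((czs τ hτ).mono (Icc_subset_Icc hs.1 le_rfl))
      have hsplit : (∫ u in (0:ℝ)..s, (zs τ u) ^ 2) + ∫ u in s..1, (zs τ u) ^ 2 = B :=
        intervalIntegral.integral_add_adjacent_intervals
          (hzs2int 0 s (left_mem_Icc.2 zero_le_one) hs)
          (hzs2int s 1 hs (right_mem_Icc.2 zero_le_one))
      have h2 : (0:ℝ) ≤ ∫ u in (0:ℝ)..s, (zs τ u) ^ 2 :=
        intervalIntegral.integral_nonneg hs.1 (fun u _ => sq_nonneg _)
      have h3 : (0:ℝ) ≤ ∫ u in s..1, (zs τ u) ^ 2 :=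
        intervalIntegral.integral_nonneg hs.2 (fun u _ => sq_nonneg _)
      simp only [even_two, Even.neg_pow]
      nlinarith [hs.1, hs.2]
    calc (∫ s in (0:ℝ)..1, (z τ s) ^ 2) ≤ ∫ _ in (0:ℝ)..1, B := by
          apply intervalIntegral.integral_mono_on zero_le_one ?_ intervalIntegrable_const hpt
          have : ContinuousOn (fun x => z τ x ^ 2) (uIcc (0:ℝ) 1) := by
            rw [uIcc_of_le zero_le_one]; exact (cz τ hτ).pow 2
          exact this.intervalIntegrable
      _ = B := by simp
  -- integration by parts
  have hIBP : ∀ τ : ℝ, 0 ≤ τ →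
      (∫ s in (0:ℝ)..1, zss τ s * z τ s) = -(∫ u in (0:ℝ)..1, (zs τ u) ^ 2) := by
    intro τ hτ
    have hzssInt : IntervalIntegrable (zss τ) volume 0 1 := by
      have h1 : Integrable (zss τ) (volume.restrict (Icc (0:ℝ) 1)) :=
        (hss τ hτ).integrable (by norm_num)
      rw [intervalIntegrable_iff_integrableOn_Icc_of_le zero_le_one enorm_ne_top]
      exact h1
    have hzsInt : IntervalIntegrable (zs τ) volume 0 1 := by
      apply ContinuousOn.intervalIntegrable
      rw [uIcc_of_le zero_le_one]; exact czs τ hτ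
    have hparts := intervalIntegral.integral_deriv_mul_eq_sub_of_hasDerivWithinAt
        (u := zs τ) (v := z τ) (u' := zss τ) (v' := zs τ)
        (fun s hs => by rw [uIcc_of_le zero_le_one] at hs ⊢; exact hzsd τ hτ s hs)
        (fun s hs => by rw [uIcc_of_le zero_le_one] at hs ⊢; exact hzd τ hτ s hs)
        hzssInt hzsInt
    rw [hb1 τ hτ, hb2 τ hτ, mul_zero, zero_mul, sub_zero] at hparts
    have hint1 : IntervalIntegrable (fun s => zss τ s * z τ s) volume 0 1 :=
      hzssInt.mul_continuousOn (by rw [uIcc_of_le zero_le_one]; exact cz τ hτ)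
    have hint2 : IntervalIntegrable (fun s => zs τ s * zs τ s) volume 0 1 := by
      apply ContinuousOn.intervalIntegrable
      rw [uIcc_of_le zero_le_one]; exact (czs τ hτ).mul (czs τ hτ)
    rw [intervalIntegral.integral_add hint1 hint2] at hparts
    have hsq : (∫ s in (0:ℝ)..1, zs τ s * zs τ s) = ∫ u in (0:ℝ)..1, (zs τ u) ^ 2 := by
      simp_rw [pow_two]
    linarith [hparts]
  -- inner products
  have hinner : ∀ (τ : ℝ) (hτ : 0 ≤ τ),
      (inner ℝ (MemLp.toLp (zss τ) (hss τ hτ)) (F τ) : ℝ)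
        = -(∫ u in (0:ℝ)..1, (zs τ u) ^ 2) := by
    intro τ hτ
    rw [hF]
    rw [l2_inner_toLp (hss τ hτ) (hmem τ), ← interval_to_restrict zero_le_one]
    exact hIBP τ hτ
  have hinner2 : ∀ (τ : ℝ) (hτ : 0 ≤ τ),
      (inner ℝ (F τ) (MemLp.toLp (zss τ) (hss τ hτ)) : ℝ)
        = -(∫ u in (0:ℝ)..1, (zs τ u) ^ 2) :=
    fun τ hτ => (real_inner_comm _ _).trans (hinner τ hτ)
  -- derivative of V
  have hVd : ∀ τ ∈ Ici (0:ℝ), HasDerivWithinAt V (DV τ) (Ici 0) τ := by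
    intro τ hτ
    have hτ' : (0:ℝ) ≤ τ := hτ
    have h1 : HasDerivWithinAt (fun σ => x σ ^ 2)
        (2 * x τ * (-3 * x τ + z τ 0)) (Ici 0) τ := by
      have h0 := (hx τ hτ').fun_pow 2
      norm_num at h0
      refine h0.congr_deriv ?_
      ring
    have h2 : HasDerivWithinAt (fun σ => (inner ℝ (F σ) (F σ) : ℝ))
        ((inner ℝ (F τ) (MemLp.toLp (zss τ) (hss τ hτ')) : ℝ)
          + (inner ℝ (MemLp.toLp (zss τ) (hss τ hτ')) (F τ) : ℝ)) (Ici 0) τ :=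
      HasDerivWithinAt.inner ℝ (hzdyn τ hτ') (hzdyn τ hτ')
    have h3 := h1.add h2
    have heq : 2 * x τ * (-3 * x τ + z τ 0)
        + ((inner ℝ (F τ) (MemLp.toLp (zss τ) (hss τ hτ')) : ℝ)
          + (inner ℝ (MemLp.toLp (zss τ) (hss τ hτ')) (F τ) : ℝ)) = DV τ := by
      rw [hinner τ hτ', hinner2 τ hτ', hDVdef]
      ring
    rw [hVdef]
    exact heq ▸ h3
  -- the differential inequality
  have hle : ∀ τ ∈ Ici (0:ℝ), DV τ ≤ -V τ := by
    intro τ hτ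
    have hτ' : (0:ℝ) ≤ τ := hτ
    have h1 := hz0 τ hτ'
    have h2 := hAB τ hτ'
    rw [hVform τ]
    simp only [hDVdef]
    nlinarith [sq_nonneg (x τ - z τ 0)]
  have hG := gronwall_exp hVd hle ht
  have hV0 : 0 ≤ V 0 := by
    rw [hVform 0]
    have h0 : (0:ℝ) ≤ ∫ s in (0:ℝ)..1, (z 0 s) ^ 2 :=
      intervalIntegral.integral_nonneg zero_le_one (fun s _ => sq_nonneg _)
    positivity
  rw [← hVform t, ← hVform 0]
  calc Real.sqrt (V t) ≤ Real.sqrt (V 0 * Real.exp (-t)) := Real.sqrt_le_sqrt hG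
    _ = Real.sqrt (V 0) * Real.sqrt (Real.exp (-t)) := Real.sqrt_mul hV0 _
    _ = Real.sqrt (V 0) * Real.exp (-t / 2) := by rw [← Real.exp_half]
    _ = 1 * Real.exp (-(1/2) * t) * Real.sqrt (V 0) := by
        rw [show -t / 2 = -(1/2) * t by ring]; ring
end
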